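/- arXiv:1110.0091 — 4 statements merged into one kernel-verified Lean document; each statement's English description precedes it below -/
import Mathlib

section
/- For every continuous function f : S² → ℂ, there exists a point x ∈ S² such that f(x) = f(-x). -/
open Complex Real

lemma tele (a : ℕ → ℂ) (h : ∀ k, a k ≠ 0) (n : ℕ) :
    ∏ k ∈ Finset.range n, (a (k+1) / a k) = a n / a 0 := by
  induction n with
  | zero => simp [div_self (h 0)]
  | succ n ih =>
    rw [Finset.prod_range_succ, ih]
    field_simp
    rw [mul_div_mul_left _ _ (h n)]

lemma min_lip (a x y : ℝ) : |min a x - min a y| ≤ |x - y| := by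
  rcases le_total x y with h | h <;> rcases le_total a x with h1 | h1 <;>
    rcases le_total a y with h2 | h2 <;>
    simp [min_eq_left, min_eq_right, h1, h2, abs_le] <;> constructor <;>
      linarith [le_abs_self (x-y), neg_abs_le (x-y)]

lemma const_of_exp (ψ : ℝ → ℂ) (hψ : Continuous ψ) {a b : ℝ} (hab : a ≤ b) (c : ℂ)
    (h : ∀ s ∈ Set.Icc a b, Complex.exp (ψ s) = c) : ψ b = ψ a := by
  have ha : a ∈ Set.Icc a b := ⟨le_refl a, hab⟩
  have hb : b ∈ Set.Icc a b := ⟨hab, le_refl b⟩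
  have hc : c ≠ 0 := by rw [← h a ha]; exact Complex.exp_ne_zero _
  have hkey : ∀ s ∈ Set.Icc a b, ∃ k : ℤ, ψ s - ψ a = k * (2 * π * Complex.I) := by
    intro s hs
    refine Complex.exp_eq_one_iff.mp ?_
    rw [Complex.exp_sub, h s hs, h a ha, div_self hc]
  set r : ℝ → ℝ := fun s => ((ψ s - ψ a) / (2 * π * Complex.I)).re with hr
  have h2pi : (2 * (π:ℂ) * Complex.I) ≠ 0 := by
    simp [Real.pi_ne_zero, Complex.I_ne_zero, Complex.ofReal_ne_zero]
  have hrc : Continuous r := by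
    apply Complex.continuous_re.comp
    exact (hψ.sub continuous_const).div_const _
  have hval : ∀ s ∈ Set.Icc a b, ∃ k : ℤ, r s = k ∧ ψ s - ψ a = (r s : ℂ) * (2 * π * Complex.I) := by
    intro s hs
    obtain ⟨k, hk⟩ := hkey s hs
    have heq : (ψ s - ψ a) / (2 * π * Complex.I) = (k : ℂ) := by
      rw [hk]; field_simp
    refine ⟨k, ?_, ?_⟩
    · rw [hr]; simp [heq]
    · rw [hr]; simp only [heq, Complex.intCast_re]
      push_cast
      exact hk
  obtain ⟨kb, hkb, hψb⟩ := hval b hb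
  have hra : r a = 0 := by simp [hr]
  have hkb0 : kb = 0 := by
    by_contra hne
    have hsub : Set.uIcc (r a) (r b) ⊆ r '' Set.Icc a b := by
      rw [← Set.uIcc_of_le hab]
      exact intermediate_value_uIcc hrc.continuousOn
    have hmem : (if kb > 0 then (1/2 : ℝ) else (-(1/2) : ℝ)) ∈ Set.uIcc (r a) (r b) := by
      rw [hra, hkb]
      rcases lt_or_gt_of_ne hne with hlt | hgt
      · have : (kb : ℝ) ≤ -1 := by exact_mod_cast (by omega : kb ≤ -1)
        simp only [if_neg (not_lt.mpr (le_of_lt hlt))]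
        rw [Set.uIcc_of_ge (by linarith : (kb:ℝ) ≤ 0)]
        constructor <;> linarith
      · have : (1 : ℝ) ≤ kb := by exact_mod_cast hgt
        simp only [if_pos hgt]
        rw [Set.uIcc_of_le (by linarith : (0:ℝ) ≤ kb)]
        constructor <;> linarith
    obtain ⟨s, hs, hrs⟩ := hsub hmem
    obtain ⟨m, hm, _⟩ := hval s hs
    rw [hm] at hrs
    rcases lt_or_gt_of_ne hne with hlt | hgt
    · simp only [if_neg (not_lt.mpr (le_of_lt hlt))] at hrs
      have h2 : (2 * (m:ℝ)) = -1 := by linarith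
      have : (2 * m : ℤ) = -1 := by exact_mod_cast h2
      omega
    · simp only [if_pos hgt] at hrs
      have h2 : (2 * (m:ℝ)) = 1 := by linarith
      have : (2 * m : ℤ) = 1 := by exact_mod_cast h2
      omega
  rw [hkb0] at hkb
  rw [hkb] at hψb
  norm_num at hψb
  exact sub_eq_zero.mp hψb

lemma log_lift (F : ℝ × ℝ → ℂ) (hF : Continuous F) (hFne : ∀ p, F p ≠ 0)
    (n : ℕ) (hn : 0 < n)
    (hest : ∀ p q : ℝ × ℝ, p ∈ Set.Icc (0:ℝ) 1 ×ˢ Set.Icc (0:ℝ) 1 →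
      q ∈ Set.Icc (0:ℝ) 1 ×ˢ Set.Icc (0:ℝ) 1 → dist p q ≤ 1/n → ‖F p - F q‖ < ‖F q‖)
    (hconst : ∀ t : ℝ, F (0, t) = F (0, 0)) :
    ∃ θ : ℝ × ℝ → ℂ, Continuous θ ∧
      (∀ p ∈ Set.Icc (0:ℝ) 1 ×ˢ Set.Icc (0:ℝ) 1, Complex.exp (θ p) = F p) ∧
      (∀ t : ℝ, θ (0, t) = θ (0, 0)) := by
  classical
  set K : Set (ℝ × ℝ) := Set.Icc (0:ℝ) 1 ×ˢ Set.Icc (0:ℝ) 1 with hK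
  set c : ℝ → ℝ := fun u => max 0 (min u 1) with hc
  have hc01 : ∀ u, c u ∈ Set.Icc (0:ℝ) 1 :=
    fun u => ⟨le_max_left 0 _, max_le (by norm_num) (min_le_right u 1)⟩
  have hccont : Continuous c := continuous_const.max (continuous_id.min continuous_const)
  have hnR : (0:ℝ) < n := by exact_mod_cast hn
  have hrange : ∀ (u : ℝ) (k : ℕ), min (c u) ((k:ℝ)/n) ∈ Set.Icc (0:ℝ) 1 :=
    fun u k => ⟨le_min (hc01 u).1 (by positivity), min_le_of_left_le (hc01 u).2⟩
  have hrange' : ∀ (u : ℝ) (k : ℕ), min (c u) (((k:ℝ)+1)/n) ∈ Set.Icc (0:ℝ) 1 :=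
    fun u k => ⟨le_min (hc01 u).1 (by positivity), min_le_of_left_le (hc01 u).2⟩
  have hminlip : ∀ (a x y : ℝ), |min a x - min a y| ≤ |x - y| := min_lip
  have hgap : ∀ j : ℕ, |(((j:ℝ)+1)/n) - ((j:ℝ)/n)| ≤ 1/n := by
    intro j
    rw [div_sub_div_same]
    simp only [add_sub_cancel_left]
    exact le_of_eq (abs_of_nonneg (by positivity))
  have hslit : ∀ p q : ℝ × ℝ, p ∈ K → q ∈ K → dist p q ≤ 1/n →
      F p / F q ∈ Complex.slitPlane := by
    intro p q hp hq hd
    have h1 : ‖F p / F q - 1‖ < 1 := by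
      rw [div_sub_one (hFne q), norm_div, div_lt_one (norm_pos_iff.mpr (hFne q))]
      exact hest p q hp hq hd
    have h2 := Complex.mem_slitPlane_of_norm_lt_one h1
    have h3 : 1 + (F p / F q - 1) = F p / F q := by ring
    rwa [h3] at h2
  have hdistj : ∀ (u : ℝ) (j : ℕ),
      dist ((min (c u) (((j:ℝ)+1)/n), (0:ℝ))) ((min (c u) ((j:ℝ)/n), (0:ℝ))) ≤ 1/n := by
    intro u j
    rw [Prod.dist_eq]
    apply max_le
    · rw [Real.dist_eq]
      exact le_trans (hminlip _ _ _) (hgap j)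
    · simp only [dist_self]
      positivity
  have hdistk : ∀ (u v : ℝ) (k : ℕ),
      dist ((c u, min (c v) (((k:ℝ)+1)/n))) ((c u, min (c v) ((k:ℝ)/n))) ≤ 1/n := by
    intro u v k
    rw [Prod.dist_eq]
    apply max_le
    · simp only [dist_self]
      positivity
    · rw [Real.dist_eq]
      exact le_trans (hminlip _ _ _) (hgap k)
  have hmemj : ∀ (u : ℝ) (x : ℝ), x ∈ Set.Icc (0:ℝ) 1 → ((x, (0:ℝ)) : ℝ × ℝ) ∈ K := by
    intro u x hx
    exact ⟨hx, by norm_num⟩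
  have hmemk : ∀ (u x : ℝ), x ∈ Set.Icc (0:ℝ) 1 → ((c u, x) : ℝ × ℝ) ∈ K :=
    fun u x hx => ⟨hc01 u, hx⟩
  set θ : ℝ × ℝ → ℂ := fun p =>
    Complex.log (F (0, 0)) +
    (∑ j ∈ Finset.range n,
      Complex.log (F (min (c p.1) (((j:ℝ)+1)/n), 0) / F (min (c p.1) ((j:ℝ)/n), 0))) +
    (∑ k ∈ Finset.range n,
      Complex.log (F (c p.1, min (c p.2) (((k:ℝ)+1)/n)) / F (c p.1, min (c p.2) ((k:ℝ)/n)))) with hθ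
  refine ⟨θ, ?_, ?_, ?_⟩
  · -- continuity
    apply Continuous.add
    apply Continuous.add continuous_const
    · apply continuous_finset_sum
      intro j _
      apply Continuous.clog
      · apply Continuous.div
        · exact hF.comp (((hccont.comp continuous_fst).min continuous_const).prodMk
            continuous_const)
        · exact hF.comp (((hccont.comp continuous_fst).min continuous_const).prodMk
            continuous_const)
        · exact fun p => hFne _
      · intro p
        exact hslit _ _ (hmemj p.1 _ (hrange' p.1 j)) (hmemj p.1 _ (hrange p.1 j)) (hdistj p.1 j)
    · apply continuous_finset_sum
      intro k _
      apply Continuous.clog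
      · apply Continuous.div
        · exact hF.comp ((hccont.comp continuous_fst).prodMk
            (((hccont.comp continuous_snd)).min continuous_const))
        · exact hF.comp ((hccont.comp continuous_fst).prodMk
            (((hccont.comp continuous_snd)).min continuous_const))
        · exact fun p => hFne _
      · intro p
        exact hslit _ _ (hmemk p.1 _ (hrange' p.2 k)) (hmemk p.1 _ (hrange p.2 k))
          (hdistk p.1 p.2 k)
  · -- exp property
    rintro ⟨s, t⟩ hp
    have hs : s ∈ Set.Icc (0:ℝ) 1 := hp.1
    have ht : t ∈ Set.Icc (0:ℝ) 1 := hp.2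
    have hcs : c s = s := by rw [hc]; simp only; rw [min_eq_left hs.2, max_eq_right hs.1]
    have hct : c t = t := by rw [hc]; simp only; rw [min_eq_left ht.2, max_eq_right ht.1]
    simp only [hθ, hcs, hct]
    rw [Complex.exp_add, Complex.exp_add, Complex.exp_sum, Complex.exp_sum,
      Complex.exp_log (hFne _)]
    have h1 := tele (fun j => F (min s ((j:ℝ)/n), 0)) (fun j => hFne _) n
    have h2 := tele (fun k => F (s, min t ((k:ℝ)/n))) (fun k => hFne _) n
    push_cast at h1 h2
    rw [div_self (ne_of_gt hnR), zero_div, min_eq_left hs.2, min_eq_right hs.1] at h1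
    rw [div_self (ne_of_gt hnR), zero_div, min_eq_left ht.2, min_eq_right ht.1] at h2
    have e1 : (∏ j ∈ Finset.range n,
        Complex.exp (Complex.log (F (min s (((j:ℝ)+1)/n), 0) / F (min s ((j:ℝ)/n), 0))))
        = F (s, 0) / F (0, 0) := by
      rw [← h1]
      exact Finset.prod_congr rfl fun j _ => Complex.exp_log (div_ne_zero (hFne _) (hFne _))
    have e2 : (∏ k ∈ Finset.range n,
        Complex.exp (Complex.log (F (s, min t (((k:ℝ)+1)/n)) / F (s, min t ((k:ℝ)/n)))))
        = F (s, t) / F (s, 0) := by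
      rw [← h2]
      exact Finset.prod_congr rfl fun k _ => Complex.exp_log (div_ne_zero (hFne _) (hFne _))
    rw [e1, e2]
    field_simp
    exact mul_div_cancel_left₀ _ (mul_ne_zero (hFne _) (hFne _))
  · -- constancy at s = 0
    have hc0 : c 0 = 0 := by simp [hc]
    have hz : ∀ u : ℝ, θ (0, u) = Complex.log (F (0, 0)) := by
      intro u
      simp only [hθ, hc0]
      have t1 : ∀ j ∈ Finset.range n,
          Complex.log (F (min (0:ℝ) (((j:ℝ)+1)/n), 0) / F (min (0:ℝ) ((j:ℝ)/n), 0)) = 0 := by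
        intro j _
        rw [min_eq_left (by positivity), min_eq_left (by positivity), div_self (hFne _),
          Complex.log_one]
      have t2 : ∀ k ∈ Finset.range n,
          Complex.log (F ((0:ℝ), min (c u) (((k:ℝ)+1)/n)) / F ((0:ℝ), min (c u) ((k:ℝ)/n))) = 0 := by
        intro k _
        rw [hconst (min (c u) (((k:ℝ)+1)/n)), hconst (min (c u) ((k:ℝ)/n)),
          div_self (hFne _), Complex.log_one]
      rw [Finset.sum_congr rfl t1, Finset.sum_congr rfl t2]
      simp
    intro t
    rw [hz t, hz 0]

noncomputable def sph (p : ℝ × ℝ) : EuclideanSpace ℝ (Fin 3) :=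
  (WithLp.equiv 2 (Fin 3 → ℝ)).symm
    ![Real.sin (π * p.1 / 2) * Real.cos (2 * π * p.2),
      Real.sin (π * p.1 / 2) * Real.sin (2 * π * p.2),
      Real.cos (π * p.1 / 2)]

lemma sph_apply (p : ℝ × ℝ) (i : Fin 3) :
    sph p i = ![Real.sin (π * p.1 / 2) * Real.cos (2 * π * p.2),
      Real.sin (π * p.1 / 2) * Real.sin (2 * π * p.2),
      Real.cos (π * p.1 / 2)] i := rfl

lemma sph_mem (p : ℝ × ℝ) : sph p ∈ Metric.sphere (0 : EuclideanSpace ℝ (Fin 3)) 1 := by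
  rw [mem_sphere_zero_iff_norm, EuclideanSpace.norm_eq]
  have h1 := Real.sin_sq_add_cos_sq (π * p.1 / 2)
  have h2 := Real.sin_sq_add_cos_sq (2 * π * p.2)
  rw [show (1:ℝ) = Real.sqrt 1 from (Real.sqrt_one).symm]
  congr 1
  rw [Fin.sum_univ_three]
  simp only [sph_apply, Matrix.cons_val_zero, Matrix.cons_val_one, Matrix.head_cons,
    Matrix.cons_val_two, Matrix.tail_cons, Real.norm_eq_abs]
  have e : ∀ x : ℝ, |x| ^ 2 = x ^ 2 := fun x => sq_abs x
  rw [e, e, e]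
  linear_combination Real.sin (π * p.1 / 2) ^ 2 * h2 + h1

lemma sph_cont : Continuous sph := by
  apply (PiLp.continuous_toLp 2 (fun _ : Fin 3 => ℝ)).comp
  refine continuous_pi fun i => ?_
  fin_cases i
  · exact (Real.continuous_sin.comp (by fun_prop)).mul (Real.continuous_cos.comp (by fun_prop))
  · exact (Real.continuous_sin.comp (by fun_prop)).mul (Real.continuous_sin.comp (by fun_prop))
  · exact Real.continuous_cos.comp (by fun_prop)

lemma sph_per (s : ℝ) : sph (s, 1) = sph (s, 0) := by
  ext i
  fin_cases i <;> simp [sph_apply, mul_one, Real.cos_two_pi, Real.sin_two_pi]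

lemma sph_odd (t : ℝ) : sph (1, t + 1/2) = -sph (1, t) := by
  ext i
  have ha : 2 * π * (t + 1/2) = 2 * π * t + π := by ring
  have hb : π * (1:ℝ) / 2 = π / 2 := by ring
  have hc : Real.cos (2 * π * (t + 2⁻¹)) = -Real.cos (2 * π * t) := by
    rw [show 2 * π * (t + 2⁻¹) = 2 * π * t + π by ring, Real.cos_add_pi]
  have hd : Real.sin (2 * π * (t + 2⁻¹)) = -Real.sin (2 * π * t) := by
    rw [show 2 * π * (t + 2⁻¹) = 2 * π * t + π by ring, Real.sin_add_pi]
  fin_cases i <;>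
    simp [sph_apply, PiLp.neg_apply, hc, hd, hb, Real.cos_pi_div_two]

noncomputable def gfun (f : C(Metric.sphere (0 : EuclideanSpace ℝ (Fin 3)) 1, ℂ))
    (x : Metric.sphere (0 : EuclideanSpace ℝ (Fin 3)) 1) : ℂ := f x - f (-x)

theorem stmt_0 (f : C(Metric.sphere (0 : EuclideanSpace ℝ (Fin 3)) 1, ℂ)) :
    ∃ x : Metric.sphere (0 : EuclideanSpace ℝ (Fin 3)) 1, f x = f (-x) := by
  by_contra hcon
  push_neg at hcon
  set g := gfun f with hg
  have hgc : Continuous g := (map_continuous f).sub ((map_continuous f).comp continuous_neg)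
  have hgne : ∀ x, g x ≠ 0 := fun x => sub_ne_zero.mpr (hcon x)
  have hgodd : ∀ x, g (-x) = - g x := by
    intro x
    simp only [hg, gfun, neg_neg]
    ring
  have hnonempty : Nonempty (Metric.sphere (0 : EuclideanSpace ℝ (Fin 3)) 1) :=
    ⟨⟨EuclideanSpace.single 0 1, by simp [mem_sphere_zero_iff_norm, EuclideanSpace.norm_single]⟩⟩
  obtain ⟨x0, -, hx0⟩ := isCompact_univ.exists_isMinOn Set.univ_nonempty hgc.norm.continuousOn
  set m := ‖g x0‖ with hm
  have hmpos : 0 < m := norm_pos_iff.mpr (hgne x0)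
  have hmle : ∀ x, m ≤ ‖g x‖ := fun x => hx0 (Set.mem_univ x)
  set F : ℝ × ℝ → ℂ := fun p => g ⟨sph p, sph_mem p⟩ with hF
  have hFc : Continuous F := hgc.comp (sph_cont.subtype_mk _)
  have hFne : ∀ p, F p ≠ 0 := fun p => hgne _
  have hFm : ∀ p, m ≤ ‖F p‖ := fun p => hmle _
  have hKc : IsCompact (Set.Icc (0:ℝ) 1 ×ˢ Set.Icc (0:ℝ) 1) := isCompact_Icc.prod isCompact_Icc
  have hUC := hKc.uniformContinuousOn_of_continuous hFc.continuousOn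
  rw [Metric.uniformContinuousOn_iff] at hUC
  obtain ⟨δ, hδpos, hδ⟩ := hUC m hmpos
  obtain ⟨n, hn⟩ := exists_nat_one_div_lt hδpos
  have hest : ∀ p q : ℝ × ℝ, p ∈ Set.Icc (0:ℝ) 1 ×ˢ Set.Icc (0:ℝ) 1 →
      q ∈ Set.Icc (0:ℝ) 1 ×ˢ Set.Icc (0:ℝ) 1 → dist p q ≤ 1/((n+1 : ℕ) : ℝ) →
      ‖F p - F q‖ < ‖F q‖ := by
    intro p q hp hq hd
    have hd' : dist p q < δ := by
      refine lt_of_le_of_lt hd (lt_of_le_of_lt ?_ hn)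
      push_cast
      exact le_refl _
    have hlt := hδ p hp q hq hd'
    rw [dist_eq_norm] at hlt
    exact lt_of_lt_of_le hlt (hFm q)
  have hconst : ∀ t, F (0, t) = F (0, 0) := by
    intro t
    simp only [hF]
    congr 1
    apply Subtype.ext
    show sph (0, t) = sph (0, 0)
    ext i
    fin_cases i <;> simp [sph_apply]
  obtain ⟨θ, hθc, hθexp, hθ0⟩ := log_lift F hFc hFne (n+1) (Nat.succ_pos n) hest hconst
  have h01 : (0:ℝ) ∈ Set.Icc (0:ℝ) 1 := Set.mem_Icc.mpr (by norm_num)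
  have h11 : (1:ℝ) ∈ Set.Icc (0:ℝ) 1 := Set.mem_Icc.mpr (by norm_num)
  have hhalf : (1/2:ℝ) ∈ Set.Icc (0:ℝ) 1 := Set.mem_Icc.mpr (by norm_num)
  have hFper : ∀ s : ℝ, F (s, 1) = F (s, 0) := by
    intro s
    simp only [hF]
    congr 1
    exact Subtype.ext (sph_per s)
  have hFodd : ∀ t : ℝ, F (1, t + 1/2) = - F (1, t) := by
    intro t
    have hx : (⟨sph (1, t + 1/2), sph_mem _⟩ : Metric.sphere (0 : EuclideanSpace ℝ (Fin 3)) 1)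
        = -(⟨sph (1, t), sph_mem _⟩ : Metric.sphere (0 : EuclideanSpace ℝ (Fin 3)) 1) := by
      apply Subtype.ext
      rw [coe_neg_sphere]
      exact sph_odd t
    simp only [hF]
    rw [hx, hgodd]
  have hψ1c : Continuous fun s : ℝ => θ (s, 1) - θ (s, 0) :=
    (hθc.comp (continuous_id.prodMk continuous_const)).sub
      (hθc.comp (continuous_id.prodMk continuous_const))
  have key1 : θ (1, 1) - θ (1, 0) = 0 := by
    have hall : ∀ s ∈ Set.Icc (0:ℝ) 1,
        Complex.exp ((fun s : ℝ => θ (s, 1) - θ (s, 0)) s) = 1 := by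
      intro s hs
      simp only
      rw [Complex.exp_sub, hθexp (s, 1) (Set.mk_mem_prod hs h11),
        hθexp (s, 0) (Set.mk_mem_prod hs h01), hFper s, div_self (hFne _)]
    have := const_of_exp _ hψ1c zero_le_one 1 hall
    rw [this, hθ0 1, sub_self]
  have hψ2c : Continuous fun t : ℝ => θ (1, t + 1/2) - θ (1, t) :=
    (hθc.comp (continuous_const.prodMk (continuous_id.add continuous_const))).sub
      (hθc.comp (continuous_const.prodMk continuous_id))
  have key2 : θ (1, 1) - θ (1, 1/2) = θ (1, 1/2) - θ (1, 0) := by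
    have hall : ∀ t ∈ Set.Icc (0:ℝ) (1/2),
        Complex.exp ((fun t : ℝ => θ (1, t + 1/2) - θ (1, t)) t) = -1 := by
      intro t ht
      simp only
      have htm : t + 1/2 ∈ Set.Icc (0:ℝ) 1 := Set.mem_Icc.mpr ⟨by linarith [ht.1], by linarith [ht.2]⟩
      have htm' : t ∈ Set.Icc (0:ℝ) 1 := Set.mem_Icc.mpr ⟨ht.1, by linarith [ht.2]⟩
      rw [Complex.exp_sub, hθexp (1, t + 1/2) (Set.mk_mem_prod h11 htm),
        hθexp (1, t) (Set.mk_mem_prod h11 htm'), hFodd t, neg_div, div_self (hFne _)]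
    have := const_of_exp _ hψ2c (by norm_num : (0:ℝ) ≤ 1/2) (-1) hall
    norm_num at this
    exact this
  have h3 : θ (1, 1/2) = θ (1, 0) := by linear_combination key1/2 - key2/2
  have h4 : F (1, 1/2) = F (1, 0) := by
    rw [← hθexp (1, 1/2) (Set.mk_mem_prod h11 hhalf), ← hθexp (1, 0) (Set.mk_mem_prod h11 h01), h3]
  have h5 : F (1, 1/2) = - F (1, 0) := by
    have := hFodd 0
    norm_num at this
    exact this
  rw [h4] at h5
  have h6 : (2:ℂ) * F (1, 0) = 0 := by linear_combination h5
  rcases mul_eq_zero.mp h6 with h | h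
  · exact two_ne_zero h
  · exact hFne _ h
end

section
/- Every odd continuous function f : S² → ℂ (i.e., f(-x) = -f(x) for all x) vanishes at some point of S². -/
lemma exp_const_eq {F : ℝ → ℂ} {s : Set ℝ} (hs : IsPreconnected s)
    (hF : ContinuousOn F s) {b : ℝ} (hb : b ∈ s)
    (h : ∀ t ∈ s, Complex.exp (F t) = Complex.exp (F b)) :
    ∀ a ∈ s, F a = F b := by
  have h2pi : (2 * (Real.pi : ℂ) * Complex.I) ≠ 0 := by
    simp [Real.pi_ne_zero, Complex.I_ne_zero, Complex.ofReal_ne_zero]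
  classical
  set q : ℝ → ℂ := fun t => (F t - F b) / (2 * (Real.pi : ℂ) * Complex.I) with hq
  have hqz : ∀ t ∈ s, ∃ n : ℤ, q t = (n : ℂ) := by
    intro t ht
    obtain ⟨n, hn⟩ := Complex.exp_eq_exp_iff_exists_int.mp (h t ht)
    exact ⟨n, by rw [hq]; field_simp [hn]; rw [hn]; ring⟩
  set N : ℝ → ℤ := fun t => if ht : ∃ n : ℤ, q t = (n : ℂ) then ht.choose else 0 with hN
  have hNq : ∀ t ∈ s, ((N t : ℤ) : ℂ) = q t := by
    intro t ht
    have := hqz t ht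
    simp only [hN, dif_pos this]
    exact this.choose_spec.symm
  have hqc : ContinuousOn q s := (hF.sub continuousOn_const).div_const _
  have hNR : ContinuousOn (fun t => ((N t : ℤ) : ℝ)) s := by
    have : ContinuousOn (fun t => (q t).re) s := (Complex.continuous_re.comp_continuousOn hqc)
    refine this.congr ?_
    intro t ht
    show ((N t : ℤ) : ℝ) = (q t).re
    rw [← hNq t ht]; simp
  have hNc : ContinuousOn N s :=
    (Int.isClosedEmbedding_coe_real.isEmbedding.continuousOn_iff).mpr hNR
  intro a ha
  have hab : N a = N b := hs.constant hNc ha hb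
  have hb0 : q b = 0 := by simp [hq]
  have : ((N a : ℤ) : ℂ) = 0 := by
    rw [hab, hNq b hb, hb0]
  have hqa : q a = 0 := by rw [← hNq a ha, this]
  have := (div_eq_zero_iff.mp hqa).resolve_right h2pi
  linear_combination this


lemma telescope_prod (G : ℕ → ℂ) (hG : ∀ j, G j ≠ 0) (n : ℕ) :
    ∏ j ∈ Finset.range n, G (j + 1) / G j = G n / G 0 := by
  induction n with
  | zero => simp [div_self (hG 0)]
  | succ k ih =>
      rw [Finset.prod_range_succ, ih, div_mul_div_comm,
        mul_comm (G k) (G (k+1)), mul_div_mul_right _ _ (hG k)]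

lemma slit_of_close {z w : ℂ} (hw : w ≠ 0) (h : ‖z - w‖ < ‖w‖) :
    z / w ∈ Complex.slitPlane := by
  have h1 : ‖z / w - 1‖ < 1 := by
    rw [show z / w - 1 = (z - w) / w by field_simp, norm_div,
      div_lt_one (norm_pos_iff.mpr hw)]
    exact h
  have h2 : |(z / w - 1).re| ≤ ‖z / w - 1‖ := Complex.abs_re_le_norm _
  have h3 : (z/w - 1).re = (z/w).re - 1 := by simp
  rw [h3] at h2
  exact Or.inl (by linarith [(abs_le.mp h2).1])

lemma lift_aux (g : ℝ × ℝ → ℂ) (hg : Continuous g) (hne : ∀ p, g p ≠ 0)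
    (n : ℕ) (hn : 0 < n)
    (hmod : ∀ s ∈ Set.Icc (0:ℝ) 1, ∀ t ∈ Set.Icc (0:ℝ) 1, ∀ t' ∈ Set.Icc (0:ℝ) 1,
      |t - t'| ≤ 1 / n → ‖g (s, t) - g (s, t')‖ < ‖g (s, t')‖) :
    ∃ L : ℝ × ℝ → ℂ, ContinuousOn L (Set.Icc 0 1 ×ˢ Set.Icc 0 1) ∧
      (∀ s ∈ Set.Icc (0:ℝ) 1, ∀ t ∈ Set.Icc (0:ℝ) 1,
        Complex.exp (L (s, t)) = g (s, t) / g (s, 0)) ∧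
      (∀ s : ℝ, L (s, 0) = 0) := by
  have hn' : (n : ℝ) ≠ 0 := Nat.cast_ne_zero.mpr hn.ne'
  have hnpos : (0:ℝ) < n := Nat.cast_pos.mpr hn
  set m : ℕ → ℝ → ℝ := fun j t => min t (j / n) with hm
  set r : ℕ → ℝ × ℝ → ℂ := fun j p => g (p.1, m (j+1) p.2) / g (p.1, m j p.2) with hr
  have hm_mem : ∀ j : ℕ, ∀ t ∈ Set.Icc (0:ℝ) 1, m j t ∈ Set.Icc (0:ℝ) 1 := by
    intro j t ht
    exact ⟨le_min ht.1 (by positivity), min_le_of_left_le ht.2⟩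
  have hcast : ∀ j : ℕ, ((j+1 : ℕ) : ℝ) / n = ((j:ℝ)+1)/n := by intro j; push_cast; ring
  have hjle : ∀ j : ℕ, (j:ℝ)/n ≤ ((j:ℝ)+1)/n := by
    intro j; gcongr; linarith
  have hdiff : ∀ j : ℕ, ∀ t : ℝ, |m (j+1) t - m j t| ≤ 1 / n := by
    intro j t
    have hstep : ((j:ℝ)+1) / n - (j:ℝ) / n = 1 / n := by ring
    have hm1 : m (j+1) t = min t (((j:ℝ)+1)/n) := by rw [hm]; simp only; rw [hcast]
    have hmono : m j t ≤ m (j+1) t := by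
      rw [hm1]; exact min_le_min le_rfl (hjle j)
    rw [abs_of_nonneg (by linarith)]
    rcases le_total t ((j:ℝ) / n) with h | h
    · have h1 : m j t = t := min_eq_left h
      have h2 : m (j+1) t = t := by rw [hm1]; exact min_eq_left (h.trans (hjle j))
      rw [h1, h2]; simp only [sub_self]; positivity
    · have h1 : m j t = (j:ℝ)/n := min_eq_right h
      have h2 : m (j+1) t ≤ ((j:ℝ)+1)/n := by rw [hm1]; exact min_le_right _ _
      rw [h1]; linarith
  have hrne : ∀ (j : ℕ) (p : ℝ × ℝ), r j p ≠ 0 := fun j p => div_ne_zero (hne _) (hne _)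
  have hslit : ∀ j : ℕ, ∀ p ∈ Set.Icc (0:ℝ) 1 ×ˢ Set.Icc (0:ℝ) 1,
      r j p ∈ Complex.slitPlane := by
    intro j p hp
    exact slit_of_close (hne _)
      (hmod p.1 hp.1 (m (j+1) p.2) (hm_mem _ _ hp.2) (m j p.2) (hm_mem _ _ hp.2) (hdiff j p.2))
  have hrc : ∀ j : ℕ, Continuous (r j) := by
    intro j
    apply Continuous.div
    · exact hg.comp (continuous_fst.prodMk (continuous_snd.min continuous_const))
    · exact hg.comp (continuous_fst.prodMk (continuous_snd.min continuous_const))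
    · exact fun p => hne _
  refine ⟨fun p => ∑ j ∈ Finset.range n, Complex.log (r j p), ?_, ?_, ?_⟩
  · apply continuousOn_finset_sum
    intro j _
    intro p hp
    exact ContinuousWithinAt.clog ((hrc j).continuousAt.continuousWithinAt) (hslit j p hp)
  · intro s hs t ht
    rw [Complex.exp_sum]
    have hexplog : ∀ j ∈ Finset.range n, Complex.exp (Complex.log (r j (s,t))) = r j (s,t) :=
      fun j _ => Complex.exp_log (hrne j _)
    rw [Finset.prod_congr rfl hexplog]
    have htel := telescope_prod (fun j => g (s, m j t)) (fun j => hne _) n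
    rw [show (∏ j ∈ Finset.range n, r j (s,t)) = ∏ j ∈ Finset.range n, g (s, m (j+1) t) / g (s, m j t) from rfl]
    rw [htel]
    have hmn : m n t = t := by
      rw [hm]; simp only; rw [div_self hn']; exact min_eq_left ht.2
    have hm0 : m 0 t = 0 := by
      rw [hm]; simp only [Nat.cast_zero, zero_div]; exact min_eq_right ht.1
    rw [hmn, hm0]
  · intro s
    apply Finset.sum_eq_zero
    intro j _
    have h0 : ∀ k : ℕ, m k (0:ℝ) = 0 := fun k => min_eq_left (by positivity)
    rw [hr]; simp only [h0, div_self (hne _), Complex.log_one]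


noncomputable def qq (s : ℝ) : ℝ := max 0 (min s 1)

@[fun_prop]
lemma qq_cont : Continuous qq := continuous_const.max (continuous_id.min continuous_const)


noncomputable def vv (s t : ℝ) : EuclideanSpace ℝ (Fin 3) :=
  (WithLp.equiv 2 (Fin 3 → ℝ)).symm
    ![qq s * Real.cos (2 * Real.pi * t), qq s * Real.sin (2 * Real.pi * t), Real.sqrt (1 - qq s ^ 2)]

lemma qq_mem (s : ℝ) : qq s ∈ Set.Icc (0:ℝ) 1 := by
  refine ⟨le_max_left _ _, ?_⟩
  simp only [qq, max_le_iff]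
  exact ⟨zero_le_one, min_le_right s 1⟩

lemma vv_norm (s t : ℝ) : ‖vv s t‖ = 1 := by
  have hq := qq_mem s
  have h1 : qq s ^ 2 ≤ 1 := by nlinarith [hq.1, hq.2]
  rw [EuclideanSpace.norm_eq]
  rw [Real.sqrt_eq_one]
  have hsq : Real.sqrt (1 - qq s ^ 2) ^ 2 = 1 - qq s ^ 2 := Real.sq_sqrt (by linarith)
  simp only [vv, WithLp.equiv_symm_apply, PiLp.toLp_apply, Fin.sum_univ_three]
  simp only [Matrix.cons_val_zero, Matrix.cons_val_one, Matrix.head_cons,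
    Matrix.cons_val_two, Matrix.tail_cons, Real.norm_eq_abs, sq_abs]
  nlinarith [Real.sin_sq_add_cos_sq (2 * Real.pi * t)]


lemma vv_cont : Continuous (fun p : ℝ × ℝ => vv p.1 p.2) := by
  unfold vv
  refine (PiLp.continuous_toLp 2 (fun _ : Fin 3 => ℝ)).comp ?_
  apply continuous_pi
  intro i
  fin_cases i <;> simp <;> fun_prop


lemma vv_zero (t : ℝ) : vv 0 t = vv 0 0 := by
  have hq0 : qq 0 = 0 := by simp [qq]
  unfold vv
  congr 1
  funext i
  fin_cases i <;> simp [hq0]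

lemma vv_period (s : ℝ) : vv s 1 = vv s 0 := by
  unfold vv
  congr 1
  funext i
  fin_cases i <;> simp [Real.cos_two_pi, Real.sin_two_pi, mul_one, mul_zero]

lemma vv_anti (t : ℝ) : vv 1 (t + 1/2) = -(vv 1 t) := by
  have hq1 : qq 1 = 1 := by simp [qq]
  have harg : 2 * Real.pi * (t + 1/2) = 2 * Real.pi * t + Real.pi := by ring
  have hsq : Real.sqrt (1 - qq 1 ^ 2) = 0 := by rw [hq1]; simp
  unfold vv
  rw [harg]
  ext i
  fin_cases i <;>
    simp [hq1, hsq, Real.cos_add_pi, Real.sin_add_pi, PiLp.neg_apply] <;> ring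


theorem stmt_1 (f : C(Metric.sphere (0 : EuclideanSpace ℝ (Fin 3)) 1, ℂ))
    (hodd : ∀ x : Metric.sphere (0 : EuclideanSpace ℝ (Fin 3)) 1, f (-x) = -f x) :
    ∃ x : Metric.sphere (0 : EuclideanSpace ℝ (Fin 3)) 1, f x = 0 := by
  by_contra hcon
  push_neg at hcon
  -- the map into the sphere
  set V : ℝ × ℝ → Metric.sphere (0 : EuclideanSpace ℝ (Fin 3)) 1 :=
    fun p => ⟨vv p.1 p.2, by rw [mem_sphere_zero_iff_norm]; exact vv_norm p.1 p.2⟩ with hV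
  have hVc : Continuous V := Continuous.subtype_mk vv_cont _
  set g : ℝ × ℝ → ℂ := fun p => f (V p) with hg
  have hgc : Continuous g := f.continuous.comp hVc
  have hne : ∀ p, g p ≠ 0 := fun p => hcon (V p)
  -- minimum of ‖f‖
  have hcpt : IsCompact (Set.univ : Set (Metric.sphere (0 : EuclideanSpace ℝ (Fin 3)) 1)) :=
    isCompact_univ
  have : Nonempty (Metric.sphere (0 : EuclideanSpace ℝ (Fin 3)) 1) :=
    (NormedSpace.sphere_nonempty (E := EuclideanSpace ℝ (Fin 3)) (x := 0) (r := 1)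
      |>.mpr zero_le_one).to_subtype
  have hnemp : (Set.univ : Set (Metric.sphere (0 : EuclideanSpace ℝ (Fin 3)) 1)).Nonempty :=
    Set.univ_nonempty
  obtain ⟨x₀, -, hx₀⟩ := hcpt.exists_isMinOn hnemp
    (Continuous.continuousOn (by continuity : Continuous fun x => ‖f x‖))
  rw [isMinOn_iff] at hx₀
  set μ : ℝ := ‖f x₀‖ with hμ
  have hμpos : 0 < μ := norm_pos_iff.mpr (hcon x₀)
  have hμle : ∀ p, μ ≤ ‖g p‖ := fun p => hx₀ (V p) (Set.mem_univ _)
  -- uniform continuity on the square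
  have hK : IsCompact (Set.Icc (0:ℝ) 1 ×ˢ Set.Icc (0:ℝ) 1) :=
    (isCompact_Icc).prod isCompact_Icc
  have huc := hK.uniformContinuousOn_of_continuous hgc.continuousOn
  rw [Metric.uniformContinuousOn_iff] at huc
  obtain ⟨δ, hδpos, hδ⟩ := huc μ hμpos
  obtain ⟨n, hnδ⟩ := exists_nat_one_div_lt hδpos
  have hmod : ∀ s ∈ Set.Icc (0:ℝ) 1, ∀ t ∈ Set.Icc (0:ℝ) 1, ∀ t' ∈ Set.Icc (0:ℝ) 1,
      |t - t'| ≤ 1 / (n+1 : ℕ) → ‖g (s, t) - g (s, t')‖ < ‖g (s, t')‖ := by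
    intro s hs t ht t' ht' htt
    have hdist : dist ((s,t) : ℝ × ℝ) (s,t') < δ := by
      rw [Prod.dist_eq]
      have : dist t t' < δ := by
        rw [Real.dist_eq]
        push_cast at htt hnδ ⊢
        linarith
      simp [this, hδpos]
    have := hδ (s,t) ⟨hs, ht⟩ (s,t') ⟨hs, ht'⟩ hdist
    rw [dist_eq_norm] at this
    exact lt_of_lt_of_le this (hμle _)
  obtain ⟨L, hL1, hL2, hL3⟩ := lift_aux g hgc hne (n+1) (Nat.succ_pos n) hmod
  have h01 : (0:ℝ) ∈ Set.Icc (0:ℝ) 1 := Set.left_mem_Icc.mpr zero_le_one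
  have h11 : (1:ℝ) ∈ Set.Icc (0:ℝ) 1 := Set.right_mem_Icc.mpr zero_le_one
  -- fact: g is independent of t at s = 0
  have hg0 : ∀ t : ℝ, g (0, t) = g (0, 0) := by
    intro t
    have : vv 0 t = vv 0 0 := vv_zero t
    simp only [hg, hV]
    congr 1
    exact Subtype.ext this
  -- fact: g (s,1) = g (s,0)
  have hg1 : ∀ s : ℝ, g (s, 1) = g (s, 0) := by
    intro s
    have : vv s 1 = vv s 0 := vv_period s
    simp only [hg, hV]
    congr 1
    exact Subtype.ext this
  -- fact: g (1, t+1/2) = - g(1,t)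
  have hganti : ∀ t : ℝ, g (1, t + 1/2) = - g (1, t) := by
    intro t
    have hv : vv 1 (t + 1/2) = -(vv 1 t) := vv_anti t
    have : V (1, t + 1/2) = -(V (1, t)) := by
      apply Subtype.ext
      rw [coe_neg_sphere]
      exact hv
    simp only [hg]
    rw [this, hodd]
  -- Step A : L (0, 1) = 0
  have hstepA : L (0, 1) = 0 := by
    have hF : ContinuousOn (fun t => L (0, t)) (Set.Icc (0:ℝ) 1) := by
      apply hL1.comp (Continuous.continuousOn (by fun_prop))
      intro t ht
      exact ⟨h01, ht⟩
    have hexp : ∀ t ∈ Set.Icc (0:ℝ) 1, Complex.exp (L (0, t)) = Complex.exp (L (0, 0)) := by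
      intro t ht
      rw [hL2 0 h01 t ht, hL3 0, hg0 t, div_self (hne _), Complex.exp_zero]
    have := exp_const_eq isPreconnected_Icc hF h01 hexp 1 h11
    rw [this, hL3]
  -- Step B : L (1, 1) = 0
  have hstepB : L (1, 1) = 0 := by
    have hF : ContinuousOn (fun s => L (s, 1)) (Set.Icc (0:ℝ) 1) := by
      apply hL1.comp (Continuous.continuousOn (by fun_prop))
      intro s hs
      exact ⟨hs, h11⟩
    have hexp : ∀ s ∈ Set.Icc (0:ℝ) 1, Complex.exp (L (s, 1)) = Complex.exp (L (0, 1)) := by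
      intro s hs
      rw [hL2 s hs 1 h11, hg1 s, div_self (hne _), hstepA, Complex.exp_zero]
    have := exp_const_eq isPreconnected_Icc hF h01 hexp 1 h11
    rw [this, hstepA]
  -- Step C : contradiction via oddness
  set D : ℝ → ℂ := fun t => L (1, t + 1/2) - L (1, t) with hD
  have hhalf : ∀ t ∈ Set.Icc (0:ℝ) (1/2), t + 1/2 ∈ Set.Icc (0:ℝ) 1 := by
    intro t ht
    constructor <;> [linarith [ht.1]; linarith [ht.2]]
  have hsub : ∀ t ∈ Set.Icc (0:ℝ) (1/2), t ∈ Set.Icc (0:ℝ) 1 := by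
    intro t ht
    exact ⟨ht.1, by linarith [ht.2]⟩
  have hDc : ContinuousOn D (Set.Icc (0:ℝ) (1/2)) := by
    apply ContinuousOn.sub
    · apply hL1.comp (Continuous.continuousOn (by fun_prop))
      intro t ht
      exact ⟨h11, hhalf t ht⟩
    · apply hL1.comp (Continuous.continuousOn (by fun_prop))
      intro t ht
      exact ⟨h11, hsub t ht⟩
  have hDexp : ∀ t ∈ Set.Icc (0:ℝ) (1/2), Complex.exp (D t) = Complex.exp (D 0) := by
    have key : ∀ t ∈ Set.Icc (0:ℝ) (1/2), Complex.exp (D t) = -1 := by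
      intro t ht
      rw [hD]
      simp only
      rw [Complex.exp_sub, hL2 1 h11 (t + 1/2) (hhalf t ht), hL2 1 h11 t (hsub t ht)]
      rw [hganti t]
      have h1 := hne (1, t)
      have h2 := hne (1, (0:ℝ))
      field_simp
    intro t ht
    rw [key t ht, key 0 (by norm_num)]
  have h120 : (1/2 : ℝ) ∈ Set.Icc (0:ℝ) (1/2) := Set.right_mem_Icc.mpr (by norm_num)
  have h020 : (0 : ℝ) ∈ Set.Icc (0:ℝ) (1/2) := Set.left_mem_Icc.mpr (by norm_num)
  have hDconst := exp_const_eq isPreconnected_Icc hDc h020 hDexp (1/2) h120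
  have hsum : L (1,1) = D (1/2) + D 0 := by
    rw [hD]
    simp only
    rw [hL3]
    norm_num
  rw [hstepB, hDconst] at hsum
  have hD0 : D 0 = 0 := by
    have : (2:ℂ) * D 0 = 0 := by rw [two_mul]; exact hsum.symm
    simpa using this
  have : Complex.exp (D 0) = -1 := by
    have key : ∀ t ∈ Set.Icc (0:ℝ) (1/2), Complex.exp (D t) = -1 := by
      intro t ht
      rw [hD]
      simp only
      rw [Complex.exp_sub, hL2 1 h11 (t + 1/2) (hhalf t ht), hL2 1 h11 t (hsub t ht)]
      rw [hganti t]
      have h1 := hne (1, t)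
      have h2 := hne (1, (0:ℝ))
      field_simp
    exact key 0 h020
  rw [hD0, Complex.exp_zero] at this
  exact absurd this (by norm_num)
end

section
/- Let X be a compact, locally path-connected, simply connected topological space, φ : X → X a homeomorphism with φⁿ = id, and λ ≠ 1 an n-th root of unity. Then for every continuous function f : X → ℂ there exists x ∈ X with ∑_{i=0}^{n-1} λⁱ f(φⁱ(x)) = 0. -/
open Complex unitInterval

private lemma auxP {Y : Type*} [TopologicalSpace Y] {F G H : Y → ℂ}
    (hH : Continuous H) (hG : Continuous G) (hF : Continuous F)
    (hexp : ∀ y, Complex.exp (H y) = F y)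
    (hclose : ∀ y, ‖G y - F y‖ < ‖F y‖) :
    ∃ H' : Y → ℂ, Continuous H' ∧ ∀ y, Complex.exp (H' y) = G y := by
  have hF0 : ∀ y, F y ≠ 0 := by
    intro y hy
    have := hclose y
    rw [hy] at this
    simp only [norm_zero, sub_zero] at this
    exact (norm_nonneg _).not_gt this
  have hball : ∀ y, ‖G y / F y - 1‖ < 1 := by
    intro y
    have h1 : G y / F y - 1 = (G y - F y) / F y := by
      field_simp [hF0 y]
    rw [h1, norm_div, div_lt_one (norm_pos_iff.mpr (hF0 y))]
    exact hclose y
  have hslit : ∀ y, G y / F y ∈ Complex.slitPlane := by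
    intro y
    rw [Complex.mem_slitPlane_iff]
    left
    have h2 : (1 - G y / F y).re ≤ ‖1 - G y / F y‖ := Complex.re_le_norm _
    have h3 : ‖1 - G y / F y‖ = ‖G y / F y - 1‖ :=
      norm_sub_rev 1 (G y / F y)
    have h4 : (1 - G y / F y).re = 1 - (G y / F y).re := by simp
    have := hball y
    linarith [h2, hball y, h4 ▸ h2]
  have hq0 : ∀ y, G y / F y ≠ 0 := fun y => Complex.slitPlane_ne_zero (hslit y)
  refine ⟨fun y => H y + Complex.log (G y / F y), ?_, ?_⟩
  · rw [continuous_iff_continuousAt]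
    intro y
    have hlog : ContinuousAt (fun y => Complex.log (G y / F y)) y :=
      ContinuousAt.comp (x := y) (g := Complex.log) (f := fun y => G y / F y)
        (continuousAt_clog (hslit y)) (hG.continuousAt.div hF.continuousAt (hF0 y))
    exact hH.continuousAt.add hlog
  · intro y
    rw [Complex.exp_add, hexp, Complex.exp_log (hq0 y), mul_div_cancel₀ _ (hF0 y)]

private lemma auxT {Y : Type*} [MetricSpace Y] [CompactSpace Y] [Nonempty Y]
    (Γ : C(I × Y, ℂ)) (hΓ : ∀ p, Γ p ≠ 0)
    (h0 : ∃ H : Y → ℂ, Continuous H ∧ ∀ y, Complex.exp (H y) = Γ (0, y)) :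
    ∃ H : Y → ℂ, Continuous H ∧ ∀ y, Complex.exp (H y) = Γ (1, y) := by
  set S : Set I := {t | ∃ H : Y → ℂ, Continuous H ∧ ∀ y, Complex.exp (H y) = Γ (t, y)} with hS
  have key : ∀ t : I, ∃ δ > (0:ℝ), ∀ s : I, dist s t < δ → (s ∈ S ↔ t ∈ S) := by
    intro t
    have hcont : ∀ u : I, Continuous fun y : Y => Γ (u, y) :=
      fun u => Γ.continuous.comp (Continuous.prodMk_right u)
    obtain ⟨y₀, -, hy₀⟩ := isCompact_univ.exists_isMinOn Set.univ_nonempty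
      ((continuous_norm.comp (hcont t)).continuousOn)
    set m : ℝ := ‖Γ (t, y₀)‖ with hm
    have hm0 : 0 < m := norm_pos_iff.mpr (hΓ (t, y₀))
    obtain ⟨δ, hδ0, hδ⟩ := Metric.uniformContinuous_iff.mp
      (CompactSpace.uniformContinuous_of_continuous Γ.continuous) (m / 2) (by linarith)
    refine ⟨δ, hδ0, fun s hs => ?_⟩
    have hclose : ∀ y : Y, ‖Γ (s, y) - Γ (t, y)‖ < m / 2 := by
      intro y
      have : dist ((s, y) : I × Y) (t, y) < δ := by
        rw [Prod.dist_eq]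
        simp only [max_lt_iff, dist_self]
        exact ⟨hs, hδ0⟩
      simpa [Complex.dist_eq] using hδ this
    have hlb : ∀ y : Y, m ≤ ‖Γ (t, y)‖ := fun y => hy₀ (Set.mem_univ y)
    constructor
    · rintro ⟨H, hHc, hH⟩
      refine auxP hHc (hcont t) (hcont s) hH (fun y => ?_)
      have h1 : ‖Γ (t, y) - Γ (s, y)‖ < m / 2 := by
        rw [norm_sub_rev]
        exact hclose y
      have h3 : ‖Γ (t, y)‖ - ‖Γ (s, y)‖ ≤
          ‖Γ (t, y) - Γ (s, y)‖ := by
        have := norm_sub_norm_le (Γ (t, y)) (Γ (s, y))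
        simpa using this
      have := hlb y
      linarith
    · rintro ⟨H, hHc, hH⟩
      refine auxP hHc (hcont s) (hcont t) hH (fun y => ?_)
      calc ‖Γ (s, y) - Γ (t, y)‖ < m / 2 := hclose y
        _ ≤ ‖Γ (t, y)‖ := by linarith [hlb y]
  have hSopen : IsOpen S := by
    rw [Metric.isOpen_iff]
    intro t ht
    obtain ⟨δ, hδ0, hδ⟩ := key t
    exact ⟨δ, hδ0, fun s hs => (hδ s hs).mpr ht⟩
  have hScopen : IsOpen Sᶜ := by
    rw [Metric.isOpen_iff]
    intro t ht
    obtain ⟨δ, hδ0, hδ⟩ := key t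
    exact ⟨δ, hδ0, fun s hs hsS => ht ((hδ s hs).mp hsS)⟩
  have hclopen : IsClopen S := ⟨⟨hScopen⟩, hSopen⟩
  have h0' : (0:I) ∈ S := h0
  rcases isClopen_iff.mp hclopen with h | h
  · rw [h] at h0'
    exact absurd h0' (Set.notMem_empty _)
  · have : (1:I) ∈ S := h.symm ▸ Set.mem_univ _
    exact this

private lemma auxStar {Y : Type*} [MetricSpace Y] [CompactSpace Y]
    (c : C(I × Y, Y)) (y₀ : Y) (hc0 : ∀ y, c (0, y) = y₀) (hc1 : ∀ y, c (1, y) = y)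
    {G : Y → ℂ} (hGc : Continuous G) (hG : ∀ y, G y ≠ 0) :
    ∃ H : Y → ℂ, Continuous H ∧ ∀ y, Complex.exp (H y) = G y := by
  have : Nonempty Y := ⟨y₀⟩
  have h := auxT ⟨fun p => G (c p), hGc.comp c.continuous⟩ (fun p => hG _)
    ⟨fun _ => Complex.log (G y₀), continuous_const, fun y => by
      simp only [ContinuousMap.coe_mk, hc0 y]
      exact Complex.exp_log (hG y₀)⟩
  obtain ⟨H, hHc, hH⟩ := h
  exact ⟨H, hHc, fun y => by simpa [hc1 y] using hH y⟩

private lemma logI {G : I → ℂ} (hGc : Continuous G) (hG : ∀ t, G t ≠ 0) :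
    ∃ H : I → ℂ, Continuous H ∧ ∀ t, Complex.exp (H t) = G t := by
  refine auxStar ⟨fun p => p.1 * p.2, ?_⟩ 0 (fun y => ?_) (fun y => ?_) hGc hG
  · exact Continuous.subtype_mk
      ((continuous_subtype_val.comp continuous_fst).mul
        (continuous_subtype_val.comp continuous_snd)) _
  · exact Subtype.ext (zero_mul (y:ℝ))
  · exact Subtype.ext (one_mul (y:ℝ))

private lemma logSq {G : I × I → ℂ} (hGc : Continuous G) (hG : ∀ z, G z ≠ 0) :
    ∃ H : I × I → ℂ, Continuous H ∧ ∀ z, Complex.exp (H z) = G z := by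
  refine auxStar ⟨fun p => (p.1 * p.2.1, p.1 * p.2.2), ?_⟩ (0, 0)
    (fun y => ?_) (fun y => ?_) hGc hG
  · refine Continuous.prodMk ?_ ?_
    · exact Continuous.subtype_mk
        ((continuous_subtype_val.comp continuous_fst).mul
          (continuous_subtype_val.comp (continuous_fst.comp continuous_snd))) _
    · exact Continuous.subtype_mk
        ((continuous_subtype_val.comp continuous_fst).mul
          (continuous_subtype_val.comp (continuous_snd.comp continuous_snd))) _
  · exact Prod.ext (Subtype.ext (zero_mul (y.1:ℝ))) (Subtype.ext (zero_mul (y.2:ℝ)))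
  · exact Prod.ext (Subtype.ext (one_mul (y.1:ℝ))) (Subtype.ext (one_mul (y.2:ℝ)))

private lemma auxConst {Y : Type*} [TopologicalSpace Y] [PreconnectedSpace Y]
    {h₁ h₂ : Y → ℂ} (hc1 : Continuous h₁) (hc2 : Continuous h₂)
    (h : ∀ y, Complex.exp (h₁ y) = Complex.exp (h₂ y)) (a b : Y) :
    h₁ a - h₂ a = h₁ b - h₂ b := by
  set d : Y → ℂ := fun y => h₁ y - h₂ y with hd
  have hdc : Continuous d := hc1.sub hc2
  have hd1 : ∀ y, Complex.exp (d y) = 1 := by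
    intro y
    rw [hd]
    simp only
    rw [Complex.exp_sub, h y, div_self (Complex.exp_ne_zero _)]
  have hk : ∀ y, ∃ k : ℤ, d y = k * (2 * Real.pi * Complex.I) := fun y =>
    Complex.exp_eq_one_iff.mp (hd1 y)
  choose k hkk using hk
  have hre : ∀ y, (d y).re = 0 := by
    intro y
    rw [hkk y]
    simp
  have him : ∀ y, (d y).im = k y * (2 * Real.pi) := by
    intro y
    rw [hkk y]
    simp
  have hψc : Continuous fun y => (d y).im := Complex.continuous_im.comp hdc
  have hmain : ∀ a b : Y, ¬ ((d a).im < (d b).im) := by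
    intro a b hab
    have hka : (k a : ℝ) < k b := by
      have h2 : (0:ℝ) < 2 * Real.pi := by positivity
      rw [him a, him b] at hab
      exact lt_of_mul_lt_mul_right hab (by positivity)
    have hkab : k a + 1 ≤ k b := by exact_mod_cast hka
    have hmem : (d a).im + Real.pi ∈ Set.Icc ((d a).im) ((d b).im) := by
      constructor
      · linarith [Real.pi_pos]
      · rw [him a, him b]
        have : (k a : ℝ) + 1 ≤ k b := by exact_mod_cast hkab
        nlinarith [Real.pi_pos]
    obtain ⟨y, hy⟩ := intermediate_value_univ a b hψc hmem
    have hy' : (d y).im = (d a).im + Real.pi := hy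
    rw [him y, him a] at hy'
    have key : (2 * ((k y : ℝ) - (k a : ℝ))) * Real.pi = 1 * Real.pi := by
      ring_nf
      ring_nf at hy'
      linarith
    have h2 : (2 * ((k y : ℝ) - (k a : ℝ))) = 1 := mul_right_cancel₀ Real.pi_ne_zero key
    have h3 : (2 * (k y - k a) : ℤ) = 1 := by exact_mod_cast h2
    omega
  have him_eq : (d a).im = (d b).im := by
    rcases lt_trichotomy ((d a).im) ((d b).im) with h | h | h
    · exact absurd h (hmain a b)
    · exact h
    · exact absurd h (hmain b a)
  have : d a = d b := Complex.ext (by rw [hre a, hre b]) him_eq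
  exact this

private lemma liftI {u : I → ℂ} (hu : Continuous u) (hu0 : ∀ t, u t ≠ 0) (a : ℂ)
    (ha : Complex.exp a = u 0) :
    ∃ L : I → ℂ, Continuous L ∧ (∀ t, Complex.exp (L t) = u t) ∧ L 0 = a := by
  obtain ⟨L', hL'c, hL'⟩ := logI hu hu0
  refine ⟨fun t => L' t + (a - L' 0), hL'c.add continuous_const, fun t => ?_, by ring⟩
  have h1 : Complex.exp (a - L' 0) = 1 := by
    rw [Complex.exp_sub, hL' 0, ha, div_self (hu0 0)]
  rw [Complex.exp_add, h1, mul_one, hL']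

private lemma uniqI {u L M : I → ℂ} (hL : Continuous L) (hM : Continuous M)
    (hLu : ∀ t, Complex.exp (L t) = u t) (hMu : ∀ t, Complex.exp (M t) = u t)
    (h0 : L 0 = M 0) : ∀ t, L t = M t := by
  intro t
  have := auxConst hL hM (fun t => (hLu t).trans (hMu t).symm) t 0
  rw [h0] at this
  have h2 : L t - M t = 0 := by rw [this]; ring
  linear_combination h2

private lemma glueI {X : Type*} [TopologicalSpace X] {g : X → ℂ}
    (hg : ∀ x, g x ≠ 0) {a b c' : X} (p : Path a b) (q : Path b c')
    (hgp : Continuous fun t => g ((p.trans q) t))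
    {L N : I → ℂ} (hLc : Continuous L) (hNc : Continuous N)
    (hL : ∀ t, Complex.exp (L t) = g (p t)) (hN : ∀ t, Complex.exp (N t) = g (q t))
    (h0 : N 0 = L 1) :
    ∃ M : I → ℂ, Continuous M ∧ (∀ t, Complex.exp (M t) = g ((p.trans q) t)) ∧
      M 0 = L 0 ∧ M 1 = N 1 := by
  have htrans0 : (p.trans q) 0 = p 0 := by
    rw [Path.source, Path.source]
  obtain ⟨M, hMc, hM, hM0⟩ := liftI hgp (fun t => hg _) (L 0)
    (by rw [htrans0, ← hL 0])
  set e₁ : I → I := fun t => ⟨t / 2, by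
    constructor
    · linarith [t.2.1]
    · linarith [t.2.2]⟩ with he₁
  set e₂ : I → I := fun t => ⟨(t + 1) / 2, by
    constructor
    · linarith [t.2.1]
    · linarith [t.2.2]⟩ with he₂
  have he₁c : Continuous e₁ := Continuous.subtype_mk (continuous_subtype_val.div_const 2) _
  have he₂c : Continuous e₂ :=
    Continuous.subtype_mk ((continuous_subtype_val.add continuous_const).div_const 2) _
  have htrans₁ : ∀ t : I, (p.trans q) (e₁ t) = p t := by
    intro t
    rw [Path.trans_apply]
    split_ifs with h
    · exact congrArg p (Subtype.ext (by show 2 * ((t:ℝ) / 2) = t; ring))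
    · exfalso
      apply h
      show (t:ℝ) / 2 ≤ 1 / 2
      linarith [t.2.2]
  have htrans₂ : ∀ t : I, (p.trans q) (e₂ t) = q t := by
    intro t
    rw [Path.trans_apply]
    split_ifs with h
    · have h' : ((t:ℝ) + 1) / 2 ≤ 1 / 2 := h
      have ht : (t:ℝ) = 0 := by linarith [t.2.1]
      have hq : q t = b := by rw [show t = 0 from Subtype.ext ht, Path.source]
      rw [hq]
      exact (congrArg p (Subtype.ext
        (by show 2 * (((t:ℝ) + 1) / 2) = ((1:I):ℝ); rw [ht]; norm_num))).trans p.target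
    · exact congrArg q (Subtype.ext (by show 2 * (((t:ℝ) + 1) / 2) - 1 = t; ring))
  have hM₁ : ∀ t, M (e₁ t) = L t := by
    apply uniqI (u := fun t => g (p t)) (hMc.comp he₁c) hLc
    · intro t
      rw [Function.comp_apply, ← htrans₁ t]
      exact hM _
    · exact hL
    · show M (e₁ 0) = L 0
      rw [show e₁ 0 = 0 from Subtype.ext (by show (0:ℝ)/2 = 0; norm_num), hM0]
  have hM₂ : ∀ t, M (e₂ t) = N t := by
    apply uniqI (u := fun t => g (q t)) (hMc.comp he₂c) hNc
    · intro t
      rw [Function.comp_apply, ← htrans₂ t]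
      exact hM _
    · exact hN
    · show M (e₂ 0) = N 0
      have he : e₂ 0 = e₁ 1 := Subtype.ext (by show ((0:ℝ)+1)/2 = (1:ℝ)/2; norm_num)
      rw [he, hM₁ 1, h0]
  refine ⟨M, hMc, hM, hM0, ?_⟩
  have he : e₂ 1 = 1 := Subtype.ext (by show ((1:ℝ)+1)/2 = 1; norm_num)
  have := hM₂ 1
  rw [he] at this
  exact this

private lemma slitAux {w z : ℂ} (hz : z ≠ 0) (h : ‖w - z‖ < ‖z‖) :
    w / z ∈ Complex.slitPlane ∧ w / z ≠ 0 := by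
  have hball : ‖w / z - 1‖ < 1 := by
    have h1 : w / z - 1 = (w - z) / z := by field_simp
    rw [h1, norm_div, div_lt_one (norm_pos_iff.mpr hz)]
    exact h
  have hslit : w / z ∈ Complex.slitPlane := by
    rw [Complex.mem_slitPlane_iff]
    left
    have h2 : (1 - w / z).re ≤ ‖1 - w / z‖ := Complex.re_le_norm _
    have h3 : ‖1 - w / z‖ = ‖w / z - 1‖ :=
      norm_sub_rev 1 (w / z)
    have h4 : (1 - w / z).re = 1 - (w / z).re := by simp
    linarith
  exact ⟨hslit, Complex.slitPlane_ne_zero hslit⟩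


theorem stmt_3 {X : Type*} [TopologicalSpace X] [CompactSpace X] [T2Space X]
    [LocallyPathConnectedSpace X] [SimplyConnectedSpace X]
    (n : ℕ) (hn : 0 < n) (φ : X ≃ₜ X) (hφ : ∀ x, (⇑φ)^[n] x = x)
    (lam : ℂ) (hlam : lam ^ n = 1) (hlam1 : lam ≠ 1)
    (f : C(X, ℂ)) :
    ∃ x : X, ∑ i ∈ Finset.range n, lam ^ i * f ((⇑φ)^[i] x) = 0 := by
  by_contra hcon
  push_neg at hcon
  set g : X → ℂ := fun x => ∑ i ∈ Finset.range n, lam ^ i * f ((⇑φ)^[i] x) with hgdef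
  have hg : ∀ x, g x ≠ 0 := hcon
  have hgc : Continuous g :=
    continuous_finset_sum _ fun i _ =>
      continuous_const.mul (f.continuous.comp (φ.continuous.iterate i))
  have hlam0 : lam ≠ 0 := by
    intro h
    rw [h, zero_pow hn.ne'] at hlam
    exact zero_ne_one hlam
  -- key functional equation
  have hkey : ∀ x, g (φ x) = lam⁻¹ * g x := by
    intro x
    have hmul : lam * g (φ x) = g x := by
      have h1 : g (φ x) = ∑ i ∈ Finset.range n, lam ^ i * f ((⇑φ)^[i + 1] x) := by
        rw [hgdef]
        refine Finset.sum_congr rfl fun i _ => ?_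
        rw [Function.iterate_succ_apply]
      have h2 : lam * g (φ x) = ∑ i ∈ Finset.range n, lam ^ (i + 1) * f ((⇑φ)^[i + 1] x) := by
        rw [h1, Finset.mul_sum]
        exact Finset.sum_congr rfl fun i _ => by ring
      have h3 := Finset.sum_range_succ (fun i => lam ^ i * f ((⇑φ)^[i] x)) n
      have h4 := Finset.sum_range_succ' (fun i => lam ^ i * f ((⇑φ)^[i] x)) n
      rw [h2]
      have h5 : lam ^ n * f ((⇑φ)^[n] x) = lam ^ 0 * f ((⇑φ)^[0] x) := by
        rw [hlam, hφ x]
        simp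
      have h6 : ∑ i ∈ Finset.range n, lam ^ (i+1) * f ((⇑φ)^[i+1] x) + lam ^ 0 * f ((⇑φ)^[0] x)
          = g x + lam ^ n * f ((⇑φ)^[n] x) := by
        rw [← h3, ← h4]
      rw [h5] at h6
      exact add_right_cancel h6
    rw [eq_inv_mul_iff_mul_eq₀ hlam0]
    exact hmul
  -- basepoint
  obtain ⟨x₀⟩ : Nonempty X := PathConnectedSpace.nonempty
  set ℓ₀ : ℂ := Complex.log (g x₀) with hℓ₀def
  have hℓ₀ : Complex.exp ℓ₀ = g x₀ := Complex.exp_log (hg x₀)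
  -- well-defined endpoint of lifts
  have wd : ∀ (x : X) (p q : Path x₀ x) (L M : I → ℂ), Continuous L → Continuous M →
      (∀ t, Complex.exp (L t) = g (p t)) → (∀ t, Complex.exp (M t) = g (q t)) →
      L 0 = M 0 → L 1 = M 1 := by
    intro x p q L M hLc hMc hL hM h0
    obtain ⟨F⟩ := SimplyConnectedSpace.paths_homotopic p q
    obtain ⟨K, hKc, hK⟩ := logSq (G := fun z => g (F z))
      (hgc.comp F.continuous) (fun z => hg _)
    have hA : ∀ t : I, K (t, 0) = K (0, 0) := by
      intro t
      have := auxConst (h₁ := fun t : I => K (t, 0)) (h₂ := fun _ : I => K (0, 0))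
        (hKc.comp (Continuous.prodMk continuous_id continuous_const)) continuous_const
        (fun s => by rw [hK, hK, F.source, F.source]) t 0
      linear_combination this
    have hB : ∀ t : I, K (t, 1) = K (0, 1) := by
      intro t
      have := auxConst (h₁ := fun t : I => K (t, 1)) (h₂ := fun _ : I => K (0, 1))
        (hKc.comp (Continuous.prodMk continuous_id continuous_const)) continuous_const
        (fun s => by rw [hK, hK, F.target, F.target]) t 0
      linear_combination this
    have hK0c : Continuous fun t : I => K (0, t) :=
      hKc.comp (Continuous.prodMk continuous_const continuous_id)
    have hK1c : Continuous fun t : I => K (1, t) :=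
      hKc.comp (Continuous.prodMk continuous_const continuous_id)
    have e1 : ∀ t : I, L t - K (0, t) = L 0 - K (0, 0) := by
      intro t
      exact auxConst (h₂ := fun t : I => K (0, t)) hLc hK0c
        (fun s => by rw [hL s, hK]; congr 1; exact (F.apply_zero s).symm) t 0
    have e2 : ∀ t : I, M t - K (1, t) = M 0 - K (1, 0) := by
      intro t
      exact auxConst (h₂ := fun t : I => K (1, t)) hMc hK1c
        (fun s => by rw [hM s, hK]; congr 1; exact (F.apply_one s).symm) t 0
    have := e1 1
    have := e2 1
    have := hA 1
    have := hB 1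
    linear_combination e1 1 - e2 1 - hB 1 + hA 1 + h0
  -- lift existence along a path
  have liftPath : ∀ {xa xb : X} (p : Path xa xb) (a : ℂ), Complex.exp a = g xa →
      ∃ L : I → ℂ, Continuous L ∧ (∀ t, Complex.exp (L t) = g (p t)) ∧ L 0 = a := by
    intro xa xb p a ha
    refine liftI (hgc.comp p.continuous) (fun t => hg _) a ?_
    show Complex.exp a = g (p 0)
    rw [p.source]
    exact ha
  have hdef : ∀ x : X, ∃ v : ℂ, ∀ (p : Path x₀ x) (L : I → ℂ), Continuous L →
      (∀ t, Complex.exp (L t) = g (p t)) → L 0 = ℓ₀ → L 1 = v := by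
    intro x
    have hj : Joined x₀ x := PathConnectedSpace.joined x₀ x
    obtain ⟨L, hLc, hL, hL0⟩ := liftPath hj.somePath ℓ₀ hℓ₀
    exact ⟨L 1, fun q M hMc hM hM0 =>
      wd x q hj.somePath M L hMc hLc hM hL (hM0.trans hL0.symm)⟩
  choose h hh using hdef
  have hexph : ∀ x, Complex.exp (h x) = g x := by
    intro x
    have hj : Joined x₀ x := PathConnectedSpace.joined x₀ x
    obtain ⟨L, hLc, hL, hL0⟩ := liftPath hj.somePath ℓ₀ hℓ₀
    rw [← hh x hj.somePath L hLc hL hL0, hL 1]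
    exact congrArg g hj.somePath.target
  -- continuity of h
  have hcont : Continuous h := by
    rw [continuous_iff_continuousAt]
    intro x
    set V : Set X := {y | ‖g y - g x‖ < ‖g x‖} with hV
    have hVopen : IsOpen V :=
      isOpen_lt (continuous_norm.comp (hgc.sub continuous_const)) continuous_const
    have hxV : x ∈ V := by
      show ‖g x - g x‖ < ‖g x‖
      simpa using norm_pos_iff.mpr (hg x)
    obtain ⟨U, ⟨hUn, hUpc⟩, hUV⟩ := (path_connected_basis x).mem_iff.mp (hVopen.mem_nhds hxV)
    have hxU : x ∈ U := mem_of_mem_nhds hUn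
    have hmemV : ∀ y ∈ U, g y / g x ∈ Complex.slitPlane ∧ g y / g x ≠ 0 :=
      fun y hy => slitAux (hg x) (hUV hy)
    have hloc : ∀ y ∈ U, h y = h x + Complex.log (g y / g x) := by
      intro y hy
      obtain hq := hUpc.joinedIn x hxU y hy
      set q : Path x y := hq.somePath with hqdef
      have hqU : ∀ t, q t ∈ U := hq.somePath_mem
      set N : I → ℂ := fun t => h x + Complex.log (g (q t) / g x) with hNdef
      have hNc : Continuous N := by
        rw [continuous_iff_continuousAt]
        intro t
        refine continuousAt_const.add ?_
        exact ContinuousAt.comp (x := t) (g := Complex.log)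
          (f := fun t => g (q t) / g x)
          (continuousAt_clog (hmemV _ (hqU t)).1)
          (((hgc.comp q.continuous).continuousAt).div continuousAt_const (hg x))
      have hN : ∀ t, Complex.exp (N t) = g (q t) := by
        intro t
        rw [hNdef]
        simp only
        rw [Complex.exp_add, hexph x, Complex.exp_log (hmemV _ (hqU t)).2,
          mul_div_cancel₀ _ (hg x)]
      have hN0 : N 0 = h x := by
        rw [hNdef]
        simp only
        rw [q.source, div_self (hg x), Complex.log_one, add_zero]
      -- lift along somePath x₀ x
      have hj : Joined x₀ x := PathConnectedSpace.joined x₀ x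
      obtain ⟨L, hLc, hL, hL0⟩ := liftPath hj.somePath ℓ₀ hℓ₀
      have hL1 : L 1 = h x := hh x hj.somePath L hLc hL hL0
      obtain ⟨M, hMc, hM, hM0, hM1⟩ := glueI hg hj.somePath q
        (hgc.comp (hj.somePath.trans q).continuous) hLc hNc hL hN (hN0.trans hL1.symm)
      have hhy : h y = M 1 := (hh y (hj.somePath.trans q) M hMc hM (hM0.trans hL0)).symm
      rw [hhy, hM1, hNdef]
      simp only
      rw [q.target]
    have hform : ContinuousAt (fun y => h x + Complex.log (g y / g x)) x := by
      refine continuousAt_const.add ?_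
      refine ContinuousAt.comp (x := x) (g := Complex.log) (f := fun y => g y / g x) ?_
        (hgc.continuousAt.div continuousAt_const (hg x))
      show ContinuousAt Complex.log (g x / g x)
      rw [div_self (hg x)]
      exact continuousAt_clog (by rw [Complex.mem_slitPlane_iff]; left; norm_num)
    exact hform.congr (Filter.eventuallyEq_of_mem hUn hloc).symm
  -- the constant
  set k : X → ℂ := fun x => h (φ x) - h x with hkdef
  have hexpk : ∀ x, Complex.exp (k x) = lam⁻¹ := by
    intro x
    rw [hkdef]
    simp only
    rw [Complex.exp_sub, hexph, hexph, hkey x, mul_div_assoc, div_self (hg x), mul_one]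
  have hlaminv0 : lam⁻¹ ≠ 0 := inv_ne_zero hlam0
  have hkconst : ∀ x, k x = k x₀ := by
    intro x
    have := auxConst (h₁ := k) (h₂ := fun _ => Complex.log lam⁻¹)
      ((hcont.comp φ.continuous).sub hcont) continuous_const
      (fun y => by rw [hexpk, Complex.exp_log hlaminv0]) x x₀
    linear_combination this
  have tele : ∀ m : ℕ, h ((⇑φ)^[m] x₀) = h x₀ + m * k x₀ := by
    intro m
    induction m with
    | zero => simp
    | succ m ih =>
      rw [Function.iterate_succ_apply']
      have := hkconst ((⇑φ)^[m] x₀)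
      push_cast
      rw [hkdef] at this
      simp only at this
      linear_combination this + ih
  have hn0 : h x₀ = h x₀ + n * k x₀ := by
    have := tele n
    rwa [hφ x₀] at this
  have hk0 : k x₀ = 0 := by
    have hnc : (n : ℂ) ≠ 0 := Nat.cast_ne_zero.mpr hn.ne'
    have : (n : ℂ) * k x₀ = 0 := by linear_combination hn0.symm
    exact (mul_eq_zero.mp this).resolve_left hnc
  have : lam⁻¹ = 1 := by
    rw [← hexpk x₀, hk0, Complex.exp_zero]
  exact hlam1 (inv_eq_one.mp this)
end

section
/- For every continuous function f : S² → ℝ² there exists a point (x₀,y₀,z₀) ∈ S² such that f(y₀,-x₀,-z₀) - f(-x₀,-y₀,z₀) + f(-y₀,x₀,-z₀) - f(x₀,y₀,z₀) = 0. -/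
open Complex Finset

lemma tele_prod (g : ℕ → ℂ) (hg : ∀ k, g k ≠ 0) (n : ℕ) :
    ∏ k ∈ Finset.range n, g (k + 1) / g k = g n / g 0 := by
  induction n with
  | zero => simp [div_self (hg 0)]
  | succ n ih =>
    rw [Finset.prod_range_succ, ih, div_mul_div_comm, mul_comm (g 0), mul_div_mul_left _ _ (hg n)]

lemma exists_lift (u : ℝ × ℝ → ℂ)
    (hu : ContinuousOn u (Set.Icc (0:ℝ) 1 ×ˢ Set.Icc (0:ℝ) 1))
    (hne : ∀ p ∈ (Set.Icc (0:ℝ) 1 ×ˢ Set.Icc (0:ℝ) 1), u p ≠ 0) :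
    ∃ θ : ℝ × ℝ → ℝ, ContinuousOn θ (Set.Icc (0:ℝ) 1 ×ˢ Set.Icc (0:ℝ) 1) ∧
      ∀ p ∈ (Set.Icc (0:ℝ) 1 ×ˢ Set.Icc (0:ℝ) 1),
        Complex.exp (θ p * Complex.I) = (‖u p‖ : ℂ)⁻¹ * u p := by
  set K : Set (ℝ × ℝ) := Set.Icc (0:ℝ) 1 ×ˢ Set.Icc (0:ℝ) 1 with hK
  have hKc : IsCompact K := isCompact_Icc.prod isCompact_Icc
  have hKne : K.Nonempty := ⟨(0,0), by constructor <;> simp⟩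
  -- minimum of the norm
  obtain ⟨pm, hpm, hmin⟩ := hKc.exists_isMinOn hKne hu.norm
  set ε : ℝ := ‖u pm‖ with hε
  have hεpos : 0 < ε := norm_pos_iff.mpr (hne pm hpm)
  have hεle : ∀ q ∈ K, ε ≤ ‖u q‖ := fun q hq => hmin hq
  -- uniform continuity
  obtain ⟨δ, hδpos, hδ⟩ := Metric.uniformContinuousOn_iff.mp
    (hKc.uniformContinuousOn_of_continuous hu) ε hεpos
  obtain ⟨n₀, hn₀⟩ := exists_nat_one_div_lt hδpos
  set N : ℕ := n₀ + 1 with hN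
  have hNpos : (0:ℝ) < N := by positivity
  have hNδ : 1 / (N:ℝ) < δ := by exact_mod_cast hn₀
  -- clamping function
  set c : ℝ → ℕ → ℝ := fun x k => min x ((k:ℝ)/N) with hc
  -- basic facts on c
  have hcmem : ∀ x ∈ Set.Icc (0:ℝ) 1, ∀ k : ℕ, c x k ∈ Set.Icc (0:ℝ) 1 := by
    intro x hx k
    constructor
    · exact le_min hx.1 (by positivity)
    · exact le_trans (min_le_left _ _) hx.2
  have hcast : ∀ k : ℕ, (((k+1):ℕ):ℝ)/N = (k:ℝ)/N + 1/N := by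
    intro k; push_cast; ring
  have hcdist : ∀ x : ℝ, ∀ k : ℕ, c x k ≤ c x (k+1) ∧ c x (k+1) - c x k ≤ 1 / N := by
    intro x k
    have hk1 : (k:ℝ)/N ≤ (((k+1):ℕ):ℝ)/N := by
      rw [hcast]; linarith [le_of_lt (show (0:ℝ) < 1/N by positivity)]
    refine ⟨min_le_min le_rfl hk1, ?_⟩
    rcases le_total x ((k:ℝ)/N) with h | h
    · rw [hc]; simp only []
      rw [min_eq_left h, min_eq_left (le_trans h hk1)]
      simp [le_of_lt (show (0:ℝ) < 1/N by positivity)]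
    · rw [hc]; simp only []
      rw [min_eq_right h]
      calc min x ((((k+1):ℕ):ℝ)/N) - (k:ℝ)/N ≤ (((k+1):ℕ):ℝ)/N - (k:ℝ)/N := by
            gcongr; exact min_le_right _ _
        _ = 1/N := by rw [hcast]; ring
  -- distance between consecutive clamp points
  have hdistc : ∀ x : ℝ, ∀ k : ℕ, dist (c x (k+1)) (c x k) < δ := by
    intro x k
    rw [Real.dist_eq, _root_.abs_of_nonneg (sub_nonneg.mpr (hcdist x k).1)]
    exact lt_of_le_of_lt (hcdist x k).2 hNδ
  -- ratio facts
  have hratio : ∀ q1 ∈ K, ∀ q2 ∈ K, dist q1 q2 < δ →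
      u q1 / u q2 ∈ Complex.slitPlane ∧ u q1 / u q2 ≠ 0 := by
    intro q1 hq1 q2 hq2 hd
    have hq2ne : u q2 ≠ 0 := hne q2 hq2
    have hq1ne : u q1 ≠ 0 := hne q1 hq1
    have hnorm : ‖u q1 / u q2 - 1‖ < 1 := by
      have h1 : u q1 / u q2 - 1 = (u q1 - u q2) / u q2 := by field_simp
      rw [h1, norm_div, div_lt_one (norm_pos_iff.mpr hq2ne)]
      calc ‖u q1 - u q2‖ = dist (u q1) (u q2) := (dist_eq_norm _ _).symm
        _ < ε := hδ q1 hq1 q2 hq2 hd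
        _ ≤ ‖u q2‖ := hεle q2 hq2
    refine ⟨Complex.mem_slitPlane_iff.mpr (Or.inl ?_), div_ne_zero hq1ne hq2ne⟩
    have hre : |(u q1 / u q2 - 1).re| < 1 :=
      lt_of_le_of_lt (Complex.abs_re_le_norm _) hnorm
    have : (u q1 / u q2 - 1).re = (u q1 / u q2).re - 1 := by simp
    rw [this] at hre
    have := abs_lt.mp hre
    linarith [this.1]
  -- membership of evaluation points
  have hmem1 : ∀ p ∈ K, ∀ k : ℕ, ((c p.1 k, (0:ℝ)) ∈ K) ∧ ((p.1, c p.2 k) ∈ K) := by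
    intro p hp k
    obtain ⟨hp1, hp2⟩ := Set.mem_prod.mp hp
    exact ⟨Set.mem_prod.mpr ⟨hcmem _ hp1 k, by simp⟩,
      Set.mem_prod.mpr ⟨hp1, hcmem _ hp2 k⟩⟩
  have hclose1 : ∀ p : ℝ × ℝ, ∀ k : ℕ,
      dist ((c p.1 (k+1), (0:ℝ))) ((c p.1 k, (0:ℝ))) < δ ∧
      dist ((p.1, c p.2 (k+1))) ((p.1, c p.2 k)) < δ := by
    intro p k
    constructor
    · rw [Prod.dist_eq]
      exact max_lt (hdistc p.1 k) (by simpa using hδpos)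
    · rw [Prod.dist_eq]
      exact max_lt (by simpa using hδpos) (hdistc p.2 k)
  -- the argument function
  set A : ℝ × ℝ → ℂ := fun p =>
    (∑ k ∈ Finset.range N, Complex.log (u (c p.1 (k+1), 0) / u (c p.1 k, 0))) +
    ∑ k ∈ Finset.range N, Complex.log (u (p.1, c p.2 (k+1)) / u (p.1, c p.2 k)) with hA
  -- ratios are fine
  have hrat1 : ∀ p ∈ K, ∀ k : ℕ,
      u (c p.1 (k+1), (0:ℝ)) / u (c p.1 k, 0) ∈ Complex.slitPlane ∧
      u (c p.1 (k+1), (0:ℝ)) / u (c p.1 k, 0) ≠ 0 :=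
    fun p hp k => hratio _ ((hmem1 p hp (k+1)).1) _ ((hmem1 p hp k).1) (hclose1 p k).1
  have hrat2 : ∀ p ∈ K, ∀ k : ℕ,
      u (p.1, c p.2 (k+1)) / u (p.1, c p.2 k) ∈ Complex.slitPlane ∧
      u (p.1, c p.2 (k+1)) / u (p.1, c p.2 k) ≠ 0 :=
    fun p hp k => hratio _ ((hmem1 p hp (k+1)).2) _ ((hmem1 p hp k).2) (hclose1 p k).2
  -- continuity of A
  have hAcont : ContinuousOn A K := by
    apply ContinuousOn.add
    · apply continuousOn_finset_sum
      intro k _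
      have hmap1 : Continuous (fun p : ℝ × ℝ => ((c p.1 (k+1), (0:ℝ)) : ℝ × ℝ)) :=
        (continuous_fst.min continuous_const).prodMk continuous_const
      have hmap2 : Continuous (fun p : ℝ × ℝ => ((c p.1 k, (0:ℝ)) : ℝ × ℝ)) :=
        (continuous_fst.min continuous_const).prodMk continuous_const
      have hdiv : ContinuousOn
          (fun p : ℝ × ℝ => u (c p.1 (k+1), 0) / u (c p.1 k, 0)) K := by
        apply ContinuousOn.div
        · exact hu.comp hmap1.continuousOn (fun p hp => (hmem1 p hp (k+1)).1)
        · exact hu.comp hmap2.continuousOn (fun p hp => (hmem1 p hp k).1)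
        · exact fun p hp => hne _ ((hmem1 p hp k).1)
      intro p hp
      exact (hdiv p hp).clog (hrat1 p hp k).1
    · apply continuousOn_finset_sum
      intro k _
      have hmap1 : Continuous (fun p : ℝ × ℝ => ((p.1, c p.2 (k+1)) : ℝ × ℝ)) :=
        continuous_fst.prodMk (continuous_snd.min continuous_const)
      have hmap2 : Continuous (fun p : ℝ × ℝ => ((p.1, c p.2 k) : ℝ × ℝ)) :=
        continuous_fst.prodMk (continuous_snd.min continuous_const)
      have hdiv : ContinuousOn
          (fun p : ℝ × ℝ => u (p.1, c p.2 (k+1)) / u (p.1, c p.2 k)) K := by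
        apply ContinuousOn.div
        · exact hu.comp hmap1.continuousOn (fun p hp => (hmem1 p hp (k+1)).2)
        · exact hu.comp hmap2.continuousOn (fun p hp => (hmem1 p hp k).2)
        · exact fun p hp => hne _ ((hmem1 p hp k).2)
      intro p hp
      exact (hdiv p hp).clog (hrat2 p hp k).1
  -- exp of A telescopes
  have h00 : ((0:ℝ), (0:ℝ)) ∈ K := ⟨by simp, by simp⟩
  have hu0 : u (0,0) ≠ 0 := hne _ h00
  have hexpA : ∀ p ∈ K, Complex.exp (A p) = u p / u (0,0) := by
    intro p hp
    obtain ⟨hp1, hp2⟩ := Set.mem_prod.mp hp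
    have hcN : ∀ x ∈ Set.Icc (0:ℝ) 1, c x N = x ∧ c x 0 = 0 := by
      intro x hx
      constructor
      · show min x ((N:ℝ)/N) = x
        rw [div_self (ne_of_gt hNpos), min_eq_left hx.2]
      · show min x (((0:ℕ):ℝ)/N) = 0
        rw [Nat.cast_zero, zero_div, min_eq_right hx.1]
    have hne1 : ∀ k : ℕ, u (c p.1 k, (0:ℝ)) ≠ 0 := fun k => hne _ ((hmem1 p hp k).1)
    have hne2 : ∀ k : ℕ, u (p.1, c p.2 k) ≠ 0 := fun k => hne _ ((hmem1 p hp k).2)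
    rw [hA]
    simp only []
    rw [Complex.exp_add, Complex.exp_sum, Complex.exp_sum]
    have e1 : ∏ k ∈ Finset.range N, Complex.exp (Complex.log (u (c p.1 (k+1), 0) / u (c p.1 k, 0)))
        = u (p.1, 0) / u (0, 0) := by
      rw [Finset.prod_congr rfl (fun k _ => Complex.exp_log (hrat1 p hp k).2)]
      rw [tele_prod (fun k => u (c p.1 k, 0)) hne1 N]
      rw [(hcN p.1 hp1).1, (hcN p.1 hp1).2]
    have e2 : ∏ k ∈ Finset.range N, Complex.exp (Complex.log (u (p.1, c p.2 (k+1)) / u (p.1, c p.2 k)))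
        = u p / u (p.1, 0) := by
      rw [Finset.prod_congr rfl (fun k _ => Complex.exp_log (hrat2 p hp k).2)]
      rw [tele_prod (fun k => u (p.1, c p.2 k)) hne2 N]
      rw [(hcN p.2 hp2).1, (hcN p.2 hp2).2]
    have hmid : u (p.1, (0:ℝ)) ≠ 0 := hne _ (Set.mem_prod.mpr ⟨hp1, by simp⟩)
    rw [e1, e2, div_mul_div_comm, mul_comm (u (0,0)), mul_div_mul_left _ _ hmid]
  refine ⟨fun p => (A p).im + (u (0,0)).arg, ?_, ?_⟩
  · exact (Complex.continuous_im.comp_continuousOn hAcont).add continuousOn_const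
  · intro p hp
    have hup : u p ≠ 0 := hne p hp
    have habs0 : ‖u (0,0)‖ ≠ 0 := norm_ne_zero_iff.mpr hu0
    -- split exponential
    have hsplit : Complex.exp (((A p).im : ℂ) * Complex.I)
        = Complex.exp (A p) / Complex.exp (((A p).re : ℂ)) := by
      rw [eq_div_iff (Complex.exp_ne_zero _), ← Complex.exp_add]
      congr 1
      rw [add_comm, Complex.re_add_im]
    have harg : Complex.exp (((u (0,0)).arg : ℂ) * Complex.I)
        = u (0,0) / (‖u (0,0)‖ : ℂ) := by
      rw [eq_div_iff (by exact_mod_cast habs0)]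
      rw [mul_comm]
      exact_mod_cast Complex.norm_mul_exp_arg_mul_I (u (0,0))
    have hid : Complex.exp (((A p).im + (u (0,0)).arg : ℝ) * Complex.I)
        = u p * ((Real.exp (A p).re * ‖u (0,0)‖ : ℝ) : ℂ)⁻¹ := by
      push_cast
      rw [add_mul, Complex.exp_add, hsplit, harg, hexpA p hp]
      have hu0' : u 0 ≠ 0 := hu0
      field_simp
    -- compute the norm to identify the positive factor
    have hR : Real.exp (A p).re * ‖u (0,0)‖ = ‖u p‖ := by
      have hpos : 0 < Real.exp (A p).re * ‖u (0,0)‖ :=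
        mul_pos (Real.exp_pos _) (norm_pos_iff.mpr hu0)
      have h1 := congrArg (‖·‖) hid
      rw [Complex.norm_exp_ofReal_mul_I] at h1
      rw [norm_mul, norm_inv, Complex.norm_real, Real.norm_eq_abs] at h1
      rw [_root_.abs_of_pos hpos] at h1
      rw [← div_eq_mul_inv] at h1
      have h2 := (div_eq_one_iff_eq (ne_of_gt hpos)).mp h1.symm
      linarith
    rw [hid, hR]
    rw [mul_comm]

lemma int_const {a b : ℝ} {g : ℝ → ℝ} (hg : ContinuousOn g (Set.Icc a b))
    (hint : ∀ t ∈ Set.Icc a b, ∃ m : ℤ, g t = m)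
    {x y : ℝ} (hx : x ∈ Set.Icc a b) (hy : y ∈ Set.Icc a b) : g x = g y := by
  -- helper for ordered pair
  suffices H : ∀ x y : ℝ, x ∈ Set.Icc a b → y ∈ Set.Icc a b → x ≤ y → g x = g y by
    rcases le_total x y with h | h
    · exact H x y hx hy h
    · exact (H y x hy hx h).symm
  intro x y hx hy hxy
  by_contra hne
  obtain ⟨m, hm⟩ := hint x hx
  obtain ⟨m', hm'⟩ := hint y hy
  have hIcc : Set.Icc x y ⊆ Set.Icc a b := Set.Icc_subset_Icc hx.1 hy.2
  have hgc : ContinuousOn g (Set.Icc x y) := hg.mono hIcc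
  have key : ∀ c ∈ Set.Icc (g x) (g y) ∪ Set.Icc (g y) (g x), ∃ t ∈ Set.Icc x y, g t = c := by
    intro c hc
    rcases hc with hc | hc
    · obtain ⟨t, ht, ht'⟩ := intermediate_value_Icc hxy hgc hc
      exact ⟨t, ht, ht'⟩
    · obtain ⟨t, ht, ht'⟩ := intermediate_value_Icc' hxy hgc hc
      exact ⟨t, ht, ht'⟩
  -- take the midpoint between the two distinct integers, shifted by 1/2 from m
  have hmm' : m ≠ m' := by
    intro h; apply hne; rw [hm, hm', h]
  -- c = value strictly between, not an integer
  rcases lt_or_gt_of_ne hmm' with hlt | hlt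
  · have hc : ((m : ℝ) + 1/2) ∈ Set.Icc (g x) (g y) := by
      constructor
      · rw [hm]; linarith
      · rw [hm']
        have : (m : ℝ) + 1 ≤ m' := by exact_mod_cast hlt
        linarith
    obtain ⟨t, ht, ht'⟩ := key _ (Or.inl hc)
    obtain ⟨m'', hm''⟩ := hint t (hIcc ht)
    rw [hm''] at ht'
    have : (2 * m'' : ℤ) = 2 * m + 1 := by
      have h2 : (2 * m'' : ℝ) = 2 * m + 1 := by linarith [ht']
      exact_mod_cast h2
    omega
  · have hc : ((m' : ℝ) + 1/2) ∈ Set.Icc (g y) (g x) := by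
      constructor
      · rw [hm']; linarith
      · rw [hm]
        have : (m' : ℝ) + 1 ≤ m := by exact_mod_cast hlt
        linarith
    obtain ⟨t, ht, ht'⟩ := key _ (Or.inr hc)
    obtain ⟨m'', hm''⟩ := hint t (hIcc ht)
    rw [hm''] at ht'
    have : (2 * m'' : ℤ) = 2 * m' + 1 := by
      have h2 : (2 * m'' : ℝ) = 2 * m' + 1 := by linarith [ht']
      exact_mod_cast h2
    omega

theorem stmt_4 (f : ℝ × ℝ × ℝ → ℝ × ℝ)
    (hf : ContinuousOn f {p : ℝ × ℝ × ℝ | p.1 ^ 2 + p.2.1 ^ 2 + p.2.2 ^ 2 = 1}) :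
    ∃ p : ℝ × ℝ × ℝ, p.1 ^ 2 + p.2.1 ^ 2 + p.2.2 ^ 2 = 1 ∧
      f (p.2.1, -p.1, -p.2.2) - f (-p.1, -p.2.1, p.2.2)
        + f (-p.2.1, p.1, -p.2.2) - f (p.1, p.2.1, p.2.2) = 0 := by
  by_contra hcon
  push_neg at hcon
  set S : Set (ℝ × ℝ × ℝ) := {p : ℝ × ℝ × ℝ | p.1 ^ 2 + p.2.1 ^ 2 + p.2.2 ^ 2 = 1} with hS
  set G : ℝ × ℝ × ℝ → ℂ := fun p =>
    (((f (p.2.1, -p.1, -p.2.2)).1 - (f (-p.1, -p.2.1, p.2.2)).1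
      + (f (-p.2.1, p.1, -p.2.2)).1 - (f (p.1, p.2.1, p.2.2)).1 : ℝ) : ℂ) +
    (((f (p.2.1, -p.1, -p.2.2)).2 - (f (-p.1, -p.2.1, p.2.2)).2
      + (f (-p.2.1, p.1, -p.2.2)).2 - (f (p.1, p.2.1, p.2.2)).2 : ℝ) : ℂ) * Complex.I with hG
  -- G is nonvanishing on S
  have hGne : ∀ p ∈ S, G p ≠ 0 := by
    intro p hp hzero
    apply hcon p hp
    rw [hG] at hzero
    simp only [Complex.ext_iff, Complex.add_re, Complex.ofReal_re, Complex.mul_re,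
      Complex.I_re, Complex.I_im, Complex.ofReal_im, Complex.add_im, Complex.mul_im,
      Complex.zero_re, Complex.zero_im] at hzero
    obtain ⟨h1, h2⟩ := hzero
    have e1 : (f (p.2.1, -p.1, -p.2.2)).1 - (f (-p.1, -p.2.1, p.2.2)).1
      + (f (-p.2.1, p.1, -p.2.2)).1 - (f (p.1, p.2.1, p.2.2)).1 = 0 := by linarith
    have e2 : (f (p.2.1, -p.1, -p.2.2)).2 - (f (-p.1, -p.2.1, p.2.2)).2
      + (f (-p.2.1, p.1, -p.2.2)).2 - (f (p.1, p.2.1, p.2.2)).2 = 0 := by linarith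
    have : (f (p.2.1, -p.1, -p.2.2) - f (-p.1, -p.2.1, p.2.2)
        + f (-p.2.1, p.1, -p.2.2) - f (p.1, p.2.1, p.2.2)).1 = 0 := by
      simp only [Prod.fst_sub, Prod.fst_add]; linarith
    have h2' : (f (p.2.1, -p.1, -p.2.2) - f (-p.1, -p.2.1, p.2.2)
        + f (-p.2.1, p.1, -p.2.2) - f (p.1, p.2.1, p.2.2)).2 = 0 := by
      simp only [Prod.snd_sub, Prod.snd_add]; linarith
    exact Prod.ext this h2'
  -- symmetry of G
  have hGφ : ∀ p : ℝ × ℝ × ℝ, G (-p.2.1, p.1, -p.2.2) = -G p := by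
    intro p
    rw [hG]
    simp only [neg_neg]
    push_cast
    ring
  -- continuity of G on S
  have hmapsS : ∀ p ∈ S, ((p.2.1, -p.1, -p.2.2) : ℝ × ℝ × ℝ) ∈ S ∧
      ((-p.1, -p.2.1, p.2.2) : ℝ × ℝ × ℝ) ∈ S ∧ ((-p.2.1, p.1, -p.2.2) : ℝ × ℝ × ℝ) ∈ S ∧
      ((p.1, p.2.1, p.2.2) : ℝ × ℝ × ℝ) ∈ S := by
    intro p hp
    have hp' : p.1 ^ 2 + p.2.1 ^ 2 + p.2.2 ^ 2 = 1 := hp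
    refine ⟨?_, ?_, ?_, ?_⟩ <;> · show _ = 1; ring_nf; ring_nf at hp'; linarith
  have hGc : ContinuousOn G S := by
    have hm1 : Continuous (fun p : ℝ × ℝ × ℝ => ((p.2.1, -p.1, -p.2.2) : ℝ × ℝ × ℝ)) :=
      (continuous_snd.fst).prodMk ((continuous_fst.neg).prodMk (continuous_snd.snd.neg))
    have hm2 : Continuous (fun p : ℝ × ℝ × ℝ => ((-p.1, -p.2.1, p.2.2) : ℝ × ℝ × ℝ)) :=
      (continuous_fst.neg).prodMk ((continuous_snd.fst.neg).prodMk continuous_snd.snd)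
    have hm3 : Continuous (fun p : ℝ × ℝ × ℝ => ((-p.2.1, p.1, -p.2.2) : ℝ × ℝ × ℝ)) :=
      (continuous_snd.fst.neg).prodMk (continuous_fst.prodMk (continuous_snd.snd.neg))
    have hm4 : Continuous (fun p : ℝ × ℝ × ℝ => ((p.1, p.2.1, p.2.2) : ℝ × ℝ × ℝ)) :=
      continuous_fst.prodMk (continuous_snd.fst.prodMk continuous_snd.snd)
    have hc1 : ContinuousOn (fun p : ℝ × ℝ × ℝ => f (p.2.1, -p.1, -p.2.2)) S :=
      hf.comp hm1.continuousOn (fun p hp => (hmapsS p hp).1)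
    have hc2 : ContinuousOn (fun p : ℝ × ℝ × ℝ => f (-p.1, -p.2.1, p.2.2)) S :=
      hf.comp hm2.continuousOn (fun p hp => (hmapsS p hp).2.1)
    have hc3 : ContinuousOn (fun p : ℝ × ℝ × ℝ => f (-p.2.1, p.1, -p.2.2)) S :=
      hf.comp hm3.continuousOn (fun p hp => (hmapsS p hp).2.2.1)
    have hc4 : ContinuousOn (fun p : ℝ × ℝ × ℝ => f (p.1, p.2.1, p.2.2)) S :=
      hf.comp hm4.continuousOn (fun p hp => (hmapsS p hp).2.2.2)
    have hre : ContinuousOn (fun p : ℝ × ℝ × ℝ =>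
        ((f (p.2.1, -p.1, -p.2.2)).1 - (f (-p.1, -p.2.1, p.2.2)).1
          + (f (-p.2.1, p.1, -p.2.2)).1 - (f (p.1, p.2.1, p.2.2)).1)) S :=
      ((hc1.fst.sub hc2.fst).add hc3.fst).sub hc4.fst
    have him : ContinuousOn (fun p : ℝ × ℝ × ℝ =>
        ((f (p.2.1, -p.1, -p.2.2)).2 - (f (-p.1, -p.2.1, p.2.2)).2
          + (f (-p.2.1, p.1, -p.2.2)).2 - (f (p.1, p.2.1, p.2.2)).2)) S :=
      ((hc1.snd.sub hc2.snd).add hc3.snd).sub hc4.snd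
    exact (Complex.continuous_ofReal.comp_continuousOn hre).add
      ((Complex.continuous_ofReal.comp_continuousOn him).mul continuousOn_const)
  -- the parametrization of the upper hemisphere
  set Γ : ℝ × ℝ → ℝ × ℝ × ℝ := fun q =>
    (q.1 * Real.cos (2*Real.pi*q.2), q.1 * Real.sin (2*Real.pi*q.2),
      Real.sqrt (1 - q.1^2)) with hΓ
  have hΓc : Continuous Γ := by
    apply Continuous.prodMk
    · exact continuous_fst.mul (Real.continuous_cos.comp (continuous_const.mul continuous_snd))
    apply Continuous.prodMk
    · exact continuous_fst.mul (Real.continuous_sin.comp (continuous_const.mul continuous_snd))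
    · exact Real.continuous_sqrt.comp (continuous_const.sub (continuous_fst.pow 2))
  have hΓS : ∀ q ∈ (Set.Icc (0:ℝ) 1 ×ˢ Set.Icc (0:ℝ) 1), Γ q ∈ S := by
    intro q hq
    have h0 : (0:ℝ) ≤ 1 - q.1^2 := by nlinarith [hq.1.1, hq.1.2]
    have h1 : Real.sqrt (1 - q.1^2) ^ 2 = 1 - q.1^2 := Real.sq_sqrt h0
    show (q.1 * Real.cos (2*Real.pi*q.2))^2 + (q.1 * Real.sin (2*Real.pi*q.2))^2
      + Real.sqrt (1 - q.1^2) ^ 2 = 1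
    rw [h1]
    linear_combination q.1^2 * (Real.sin_sq_add_cos_sq (2*Real.pi*q.2))
  set u : ℝ × ℝ → ℂ := fun q => G (Γ q) with hu
  have huc : ContinuousOn u (Set.Icc (0:ℝ) 1 ×ˢ Set.Icc (0:ℝ) 1) :=
    hGc.comp hΓc.continuousOn hΓS
  have hune : ∀ q ∈ (Set.Icc (0:ℝ) 1 ×ˢ Set.Icc (0:ℝ) 1), u q ≠ 0 :=
    fun q hq => hGne _ (hΓS q hq)
  obtain ⟨θ, hθc, hθ⟩ := exists_lift u huc hune
  -- abbreviation for membership in the square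
  have hmemK : ∀ a b : ℝ, a ∈ Set.Icc (0:ℝ) 1 → b ∈ Set.Icc (0:ℝ) 1 →
      ((a, b) : ℝ × ℝ) ∈ (Set.Icc (0:ℝ) 1 ×ˢ Set.Icc (0:ℝ) 1) :=
    fun a b ha hb => Set.mem_prod.mpr ⟨ha, hb⟩
  -- key facts about u
  have huc1 : ∀ t : ℝ, u (0, t) = u (0, 0) := by
    intro t
    have : Γ (0, t) = Γ (0, 0) := by
      rw [hΓ]; simp
    rw [hu]; simp only []; rw [this]
  have huc2 : ∀ s : ℝ, u (s, 1) = u (s, 0) := by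
    intro s
    have : Γ (s, 1) = Γ (s, 0) := by
      rw [hΓ]
      simp only [mul_one, mul_zero, Real.cos_two_pi, Real.sin_two_pi, Real.cos_zero,
        Real.sin_zero]
    rw [hu]; simp only []; rw [this]
  have huc3 : ∀ t : ℝ, u (1, t + 1/4) = -u (1, t) := by
    intro t
    have hang : 2*Real.pi*(t + 1/4) = 2*Real.pi*t + Real.pi/2 := by ring
    have hΓ3 : Γ (1, t + 1/4) = (-(Γ (1, t)).2.1, (Γ (1, t)).1, -(Γ (1, t)).2.2) := by
      rw [hΓ]
      simp only [one_mul, hang, Real.cos_add_pi_div_two, Real.sin_add_pi_div_two]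
      norm_num
    rw [hu]; simp only []; rw [hΓ3, hGφ]
  -- consequences of the lift
  have hpair : ∀ p ∈ (Set.Icc (0:ℝ) 1 ×ˢ Set.Icc (0:ℝ) 1),
      ∀ q ∈ (Set.Icc (0:ℝ) 1 ×ˢ Set.Icc (0:ℝ) 1), u p = u q →
      ∃ m : ℤ, θ p - θ q = 2*Real.pi*m := by
    intro p hp q hq hupq
    have h1 := hθ p hp
    have h2 := hθ q hq
    have hne2 : Complex.exp ((θ q : ℂ) * Complex.I) ≠ 0 := Complex.exp_ne_zero _
    have hexp : Complex.exp (((θ p - θ q : ℝ) : ℂ) * Complex.I) = 1 := by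
      push_cast
      rw [sub_mul, Complex.exp_sub, h1, h2, hupq]
      exact div_self (mul_ne_zero
        (inv_ne_zero (Complex.ofReal_ne_zero.mpr (norm_ne_zero_iff.mpr (hune q hq))))
        (hune q hq))
    obtain ⟨m, hm⟩ := Complex.exp_eq_one_iff.mp hexp
    refine ⟨m, ?_⟩
    have h3 := congrArg Complex.im hm
    simp at h3
    linarith
  have hpair' : ∀ p ∈ (Set.Icc (0:ℝ) 1 ×ˢ Set.Icc (0:ℝ) 1),
      ∀ q ∈ (Set.Icc (0:ℝ) 1 ×ˢ Set.Icc (0:ℝ) 1), u p = -u q →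
      ∃ m : ℤ, θ p - θ q = Real.pi + 2*Real.pi*m := by
    intro p hp q hq hupq
    have h1 := hθ p hp
    have h2 := hθ q hq
    have hexp : Complex.exp (((θ p - θ q + Real.pi : ℝ) : ℂ) * Complex.I) = 1 := by
      push_cast
      rw [add_mul, sub_mul, Complex.exp_add, Complex.exp_sub, h1, h2, hupq,
        Complex.exp_pi_mul_I]
      rw [norm_neg]
      have hq0 : u q ≠ 0 := hune q hq
      field_simp
      exact div_self (Complex.ofReal_ne_zero.mpr (norm_ne_zero_iff.mpr hq0))
    obtain ⟨m, hm⟩ := Complex.exp_eq_one_iff.mp hexp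
    refine ⟨m - 1, ?_⟩
    have h3 := congrArg Complex.im hm
    simp at h3
    push_cast
    linarith
  -- Step 1 : θ(0,1) = θ(0,0)
  have hc01 : Continuous (fun t : ℝ => ((0:ℝ), t)) := continuous_const.prodMk continuous_id
  have step1 : θ (0, 1) = θ (0, 0) := by
    have hcont : ContinuousOn (fun t : ℝ => (θ (0, t) - θ (0, 0)) / (2*Real.pi))
        (Set.Icc (0:ℝ) 1) := by
      apply ContinuousOn.div_const
      apply ContinuousOn.sub _ continuousOn_const
      exact hθc.comp hc01.continuousOn (fun t ht => hmemK 0 t (by norm_num) ht)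
    have hint : ∀ t ∈ Set.Icc (0:ℝ) 1,
        ∃ m : ℤ, (θ (0, t) - θ (0, 0)) / (2*Real.pi) = m := by
      intro t ht
      obtain ⟨m, hm⟩ := hpair (0, t) (hmemK 0 t (by norm_num) ht)
        (0, 0) (hmemK 0 0 (by norm_num) (by norm_num)) (huc1 t)
      exact ⟨m, by rw [hm]; field_simp⟩
    have := int_const hcont hint (Set.mem_Icc.mpr ⟨by norm_num, le_refl 1⟩)
      (Set.mem_Icc.mpr ⟨le_refl 0, by norm_num⟩)
    simp only [sub_self, zero_div] at this
    rcases div_eq_zero_iff.mp this with h | h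
    · linarith
    · linarith [Real.pi_pos]
  -- Step 2 : θ(1,1) = θ(1,0)
  have step2 : θ (1, 1) = θ (1, 0) := by
    have hcs1 : Continuous (fun s : ℝ => (s, (1:ℝ))) := continuous_id.prodMk continuous_const
    have hcs0 : Continuous (fun s : ℝ => (s, (0:ℝ))) := continuous_id.prodMk continuous_const
    have hcont : ContinuousOn (fun s : ℝ => (θ (s, 1) - θ (s, 0)) / (2*Real.pi))
        (Set.Icc (0:ℝ) 1) := by
      apply ContinuousOn.div_const
      apply ContinuousOn.sub
      · exact hθc.comp hcs1.continuousOn (fun s hs => hmemK s 1 hs (by norm_num))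
      · exact hθc.comp hcs0.continuousOn (fun s hs => hmemK s 0 hs (by norm_num))
    have hint : ∀ s ∈ Set.Icc (0:ℝ) 1,
        ∃ m : ℤ, (θ (s, 1) - θ (s, 0)) / (2*Real.pi) = m := by
      intro s hs
      obtain ⟨m, hm⟩ := hpair (s, 1) (hmemK s 1 hs (by norm_num))
        (s, 0) (hmemK s 0 hs (by norm_num)) (huc2 s)
      exact ⟨m, by rw [hm]; field_simp⟩
    have h10 := int_const hcont hint (Set.mem_Icc.mpr ⟨by norm_num, le_refl 1⟩)
      (Set.mem_Icc.mpr ⟨le_refl 0, by norm_num⟩)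
    rw [step1] at h10
    simp only [sub_self, zero_div] at h10
    rcases div_eq_zero_iff.mp h10 with h | h
    · linarith
    · linarith [Real.pi_pos]
  -- Step 3 : equator jumps
  have hq4 : ∀ t : ℝ, t ∈ Set.Icc (0:ℝ) (3/4) → (t + 1/4) ∈ Set.Icc (0:ℝ) 1 := by
    intro t ht
    exact Set.mem_Icc.mpr ⟨by linarith [ht.1], by linarith [ht.2]⟩
  have hq1 : ∀ t : ℝ, t ∈ Set.Icc (0:ℝ) (3/4) → t ∈ Set.Icc (0:ℝ) 1 := by
    intro t ht
    exact Set.mem_Icc.mpr ⟨ht.1, by linarith [ht.2]⟩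
  have hgqint : ∀ t ∈ Set.Icc (0:ℝ) (3/4),
      ∃ m : ℤ, (θ (1, t + 1/4) - θ (1, t) - Real.pi) / (2*Real.pi) = m := by
    intro t ht
    obtain ⟨m, hm⟩ := hpair' (1, t + 1/4) (hmemK 1 (t+1/4) (by norm_num) (hq4 t ht))
      (1, t) (hmemK 1 t (by norm_num) (hq1 t ht)) (huc3 t)
    refine ⟨m, ?_⟩
    rw [sub_eq_iff_eq_add'.mpr hm]
    field_simp
  have hgqc : ContinuousOn
      (fun t : ℝ => (θ (1, t + 1/4) - θ (1, t) - Real.pi) / (2*Real.pi))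
      (Set.Icc (0:ℝ) (3/4)) := by
    apply ContinuousOn.div_const
    apply ContinuousOn.sub _ continuousOn_const
    apply ContinuousOn.sub
    · have hmap : Continuous (fun t : ℝ => ((1:ℝ), t + 1/4)) :=
        continuous_const.prodMk (continuous_id.add continuous_const)
      exact hθc.comp hmap.continuousOn
        (fun t ht => hmemK 1 (t+1/4) (by norm_num) (hq4 t ht))
    · have hmap : Continuous (fun t : ℝ => ((1:ℝ), t)) :=
        continuous_const.prodMk continuous_id
      exact hθc.comp hmap.continuousOn
        (fun t ht => hmemK 1 t (by norm_num) (hq1 t ht))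
  obtain ⟨m₀, hm₀⟩ := hgqint 0 (by norm_num)
  have hconst : ∀ t ∈ Set.Icc (0:ℝ) (3/4),
      θ (1, t + 1/4) - θ (1, t) = Real.pi + 2*Real.pi*m₀ := by
    intro t ht
    have := int_const hgqc hgqint ht (Set.mem_Icc.mpr ⟨le_refl 0, by norm_num⟩)
    rw [hm₀] at this
    have hπ : (2*Real.pi) ≠ 0 := by positivity
    have h4 := (div_eq_iff hπ).mp this
    linarith
  have E0 := hconst 0 (by norm_num)
  have E1 := hconst (1/4) (by norm_num)
  have E2 := hconst (1/2) (by norm_num)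
  have E3 := hconst (3/4) (by norm_num)
  norm_num at E0 E1 E2 E3
  have hsum : 4*Real.pi + 8*Real.pi*(m₀:ℝ) = 0 := by
    have step2' : θ (1 : ℝ × ℝ) = θ (1, 0) := step2
    linarith
  have h5 : Real.pi * (4 + 8*(m₀:ℝ)) = 0 := by linear_combination hsum
  rcases mul_eq_zero.mp h5 with h | h
  · exact Real.pi_ne_zero h
  · have h8 : (8*m₀ : ℤ) = -4 := by exact_mod_cast (by linarith : (8*(m₀:ℝ)) = -4)
    omega
end
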